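/- arXiv:2312.09858 — 4 statements merged into one kernel-verified Lean document; each statement's English description precedes it below -/
import Mathlib

section
/- Let A ∈ ℝ^{m×n} and suppose the dual Slater condition holds: there exists y ∈ ℝ^m with Aᵀy < 0 (componentwise). Then the Hoffman constant of the mapping P_A* (computed with the dual norms) satisfies H(P_A*) = max { ‖x‖ : x ∈ ℝ^n, x ≥ 0, ‖Ax‖ ≤ 1 }. -/
open Matrix Set

noncomputable section

/-- A norm on `Fin n → ℝ`, given as a function with the norm axioms. -/
structure IsNorm {n : ℕ} (ν : (Fin n → ℝ) → ℝ) : Prop where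
  nonneg : ∀ x, 0 ≤ ν x
  eq_zero_iff : ∀ x, ν x = 0 ↔ x = 0
  smul : ∀ (a : ℝ) (x : Fin n → ℝ), ν (a • x) = |a| * ν x
  triangle : ∀ x y, ν (x + y) ≤ ν x + ν y

/-- The dual norm of `ν`, with respect to the standard dot-product pairing. -/
def dualNorm {n : ℕ} (ν : (Fin n → ℝ) → ℝ) (z : Fin n → ℝ) : ℝ :=
  sSup {r | ∃ x, ν x ≤ 1 ∧ r = z ⬝ᵥ x}

/-- Point-to-set distance induced by the norm `ν`. -/
def distWith {n : ℕ} (ν : (Fin n → ℝ) → ℝ) (x : Fin n → ℝ) (S : Set (Fin n → ℝ)) : ℝ :=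
  sInf ((fun s => ν (x - s)) '' S)

/-- The graph of a set-valued mapping. -/
def graphOf {p q : ℕ} (Φ : (Fin p → ℝ) → Set (Fin q → ℝ)) :
    Set ((Fin p → ℝ) × (Fin q → ℝ)) := {z | z.2 ∈ Φ z.1}

/-- The domain of a set-valued mapping. -/
def domOf {p q : ℕ} (Φ : (Fin p → ℝ) → Set (Fin q → ℝ)) : Set (Fin p → ℝ) :=
  {u | (Φ u).Nonempty}

/-- The image of a set-valued mapping. -/
def imOf {p q : ℕ} (Φ : (Fin p → ℝ) → Set (Fin q → ℝ)) : Set (Fin q → ℝ) :=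
  ⋃ u, Φ u

/-- The inverse of a set-valued mapping. -/
def invOf {p q : ℕ} (Φ : (Fin p → ℝ) → Set (Fin q → ℝ)) : (Fin q → ℝ) → Set (Fin p → ℝ) :=
  fun v => {u | v ∈ Φ u}

/-- A polyhedron: an intersection of finitely many closed half-spaces. -/
def IsPolyhedron {E : Type*} [AddCommGroup E] [Module ℝ E] (S : Set E) : Prop :=
  ∃ (k : ℕ) (f : Fin k → E →ₗ[ℝ] ℝ) (c : Fin k → ℝ), S = {x | ∀ i, f i x ≤ c i}

/-- A set-valued mapping is polyhedral if its graph is a polyhedron. -/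
def IsPolyhedralMapping {p q : ℕ} (Φ : (Fin p → ℝ) → Set (Fin q → ℝ)) : Prop :=
  IsPolyhedron (graphOf Φ)

/-- A set-valued mapping is sublinear if its graph is a convex cone containing the origin. -/
def IsSublinearMapping {p q : ℕ} (Φ : (Fin p → ℝ) → Set (Fin q → ℝ)) : Prop :=
  (0 : Fin q → ℝ) ∈ Φ 0 ∧ Convex ℝ (graphOf Φ) ∧
    ∀ (t : ℝ), 0 ≤ t → ∀ z ∈ graphOf Φ, t • z ∈ graphOf Φ

/-- The Hoffman constant of a set-valued mapping, with respect to the norms `νp, νq`. -/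
def hoffmanConst {p q : ℕ} (νp : (Fin p → ℝ) → ℝ) (νq : (Fin q → ℝ) → ℝ)
    (Φ : (Fin p → ℝ) → Set (Fin q → ℝ)) : ℝ :=
  sSup {r | ∃ u v, u ∈ domOf Φ ∧ v ∈ imOf Φ ∧ v ∉ Φ u ∧
    r = distWith νq v (Φ u) / distWith νp u (invOf Φ v)}

/-- The norm of a sublinear set-valued mapping, with respect to the norms `νp, νq`. -/
def svmNorm {p q : ℕ} (νp : (Fin p → ℝ) → ℝ) (νq : (Fin q → ℝ) → ℝ)
    (Φ : (Fin p → ℝ) → Set (Fin q → ℝ)) : ℝ :=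
  sSup {r | ∃ u, u ∈ domOf Φ ∧ νp u ≤ 1 ∧ r = sInf (νq '' Φ u)}

/-- The tangent cone to a set `G` at a point `g ∈ G`. -/
def polyTangentCone {E : Type*} [AddCommGroup E] [Module ℝ E] (G : Set E) (g : E) : Set E :=
  {d | ∃ t : ℝ, 0 < t ∧ g + t • d ∈ G}

/-- The collection of tangent cones to the graph of `Φ`. -/
def tangentCones {p q : ℕ} (Φ : (Fin p → ℝ) → Set (Fin q → ℝ)) :
    Set (Set ((Fin p → ℝ) × (Fin q → ℝ))) :=
  {T | ∃ u v, v ∈ Φ u ∧ T = polyTangentCone (graphOf Φ) (u, v)}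

/-- The set-valued mapping whose graph is `T`. -/
def mapOfGraph {p q : ℕ} (T : Set ((Fin p → ℝ) × (Fin q → ℝ))) :
    (Fin p → ℝ) → Set (Fin q → ℝ) := fun w => {z | (w, z) ∈ T}

/-- A subset is a linear subspace if it is the underlying set of a submodule. -/
def IsLinearSubspace {E : Type*} [AddCommGroup E] [Module ℝ E] (S : Set E) : Prop :=
  ∃ W : Submodule ℝ E, S = ↑W

/-- The upper adjoint of a sublinear mapping. -/
def upperAdjoint {p q : ℕ} (Φ : (Fin p → ℝ) → Set (Fin q → ℝ)) :
    (Fin q → ℝ) → Set (Fin p → ℝ) :=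
  fun w => {z | ∀ u v, v ∈ Φ u → z ⬝ᵥ u ≤ w ⬝ᵥ v}

/-- The solution mapping `b ↦ {x ∈ R : Ax - b ∈ S}`. -/
def solMap {m n : ℕ} (A : Matrix (Fin m) (Fin n) ℝ) (R : Set (Fin n → ℝ))
    (S : Set (Fin m → ℝ)) : (Fin m → ℝ) → Set (Fin n → ℝ) :=
  fun b => {x | x ∈ R ∧ A *ᵥ x - b ∈ S}

/-- The dual cone `{z : ⟨z,x⟩ ≥ 0 for all x ∈ C}`. -/
def dualConeOf {n : ℕ} (C : Set (Fin n → ℝ)) : Set (Fin n → ℝ) :=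
  {z | ∀ x ∈ C, 0 ≤ z ⬝ᵥ x}

/-- A polyhedral cone. -/
def IsPolyhedralCone {n : ℕ} (C : Set (Fin n → ℝ)) : Prop :=
  IsPolyhedron C ∧ (0 : Fin n → ℝ) ∈ C ∧ ∀ (t : ℝ), 0 ≤ t → ∀ x ∈ C, t • x ∈ C

/-- The dual solution mapping `c ↦ {y ∈ S* : c - Aᵀy ∈ R*}`. -/
def dualSolMap {m n : ℕ} (A : Matrix (Fin m) (Fin n) ℝ) (R : Set (Fin n → ℝ))
    (S : Set (Fin m → ℝ)) : (Fin n → ℝ) → Set (Fin m → ℝ) :=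
  fun c => {y | y ∈ dualConeOf S ∧ c - Aᵀ *ᵥ y ∈ dualConeOf R}

/-- The box `{x : ℓ ≤ x ≤ u}`. -/
def boxSet {n : ℕ} (ℓ u : Fin n → ℝ) : Set (Fin n → ℝ) :=
  {x | ∀ i, ℓ i ≤ x i ∧ x i ≤ u i}

/-- The nonnegative orthant of `ℝ^n`. -/
def nonnegOrthant (n : ℕ) : Set (Fin n → ℝ) := {x | ∀ i, 0 ≤ x i}

/-- The Euclidean norm on `Fin n → ℝ`. -/
def euclNorm {n : ℕ} (x : Fin n → ℝ) : ℝ := Real.sqrt (∑ i, x i ^ 2)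

/-- The operator norm induced by the Euclidean norms. -/
def opNorm2 {m n : ℕ} (M : Matrix (Fin m) (Fin n) ℝ) : ℝ :=
  sSup {r | ∃ x, euclNorm x ≤ 1 ∧ r = euclNorm (M *ᵥ x)}

/-- The chi condition measure `χ(A) = sup_{D} ‖(ADAᵀ)⁻¹AD‖₂`. -/
def chiMeasure {m n : ℕ} (A : Matrix (Fin m) (Fin n) ℝ) : ℝ :=
  sSup {r | ∃ d : Fin n → ℝ, (∀ i, 0 < d i) ∧
    r = opNorm2 ((A * Matrix.diagonal d * Aᵀ)⁻¹ * (A * Matrix.diagonal d))}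

/-- The chi-bar condition measure `χ̄(A) = sup_{D} ‖Aᵀ(ADAᵀ)⁻¹AD‖₂`. -/
def chiBarMeasure {m n : ℕ} (A : Matrix (Fin m) (Fin n) ℝ) : ℝ :=
  sSup {r | ∃ d : Fin n → ℝ, (∀ i, 0 < d i) ∧
    r = opNorm2 (Aᵀ * (A * Matrix.diagonal d * Aᵀ)⁻¹ * (A * Matrix.diagonal d))}

/-- The orthogonal complement (w.r.t. the dot product) of a set. -/
def perpOf {m : ℕ} (L : Set (Fin m → ℝ)) : Set (Fin m → ℝ) :=
  {y | ∀ s ∈ L, y ⬝ᵥ s = 0}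

/-- The mapping `P_A : b ↦ {x ≥ 0 : Ax = b}`. -/
def PA {m n : ℕ} (A : Matrix (Fin m) (Fin n) ℝ) : (Fin m → ℝ) → Set (Fin n → ℝ) :=
  fun b => {x | (∀ i, 0 ≤ x i) ∧ A *ᵥ x = b}

/-- The mapping `P_A* : c ↦ {y : Aᵀy ≤ c}`. -/
def PAstar {m n : ℕ} (A : Matrix (Fin m) (Fin n) ℝ) : (Fin n → ℝ) → Set (Fin m → ℝ) :=
  fun c => {y | ∀ i, (Aᵀ *ᵥ y) i ≤ c i}

/-- Signature vectors: entries equal to `1` or `-1`. -/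
def IsSignVector {n : ℕ} (d : Fin n → ℝ) : Prop := ∀ i, d i = 1 ∨ d i = -1

end


section AuxHoffman
open Pointwise

namespace IsNorm
variable {k : ℕ} {ν : (Fin k → ℝ) → ℝ} (hν : IsNorm ν)
include hν

theorem zero' : ν 0 = 0 := (hν.eq_zero_iff 0).2 rfl

theorem neg' (x : Fin k → ℝ) : ν (-x) = ν x := by
  have := hν.smul (-1) x
  simpa using this

theorem sub_le (x y z : Fin k → ℝ) : ν (x - z) ≤ ν (x - y) + ν (y - z) := by
  have := hν.triangle (x - y) (y - z)
  simpa using this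

theorem pos (x : Fin k → ℝ) (hx : x ≠ 0) : 0 < ν x :=
  lt_of_le_of_ne (hν.nonneg x) (fun h => hx ((hν.eq_zero_iff x).1 h.symm))

theorem sum_le {ι : Type*} (s : Finset ι) (f : ι → (Fin k → ℝ)) :
    ν (∑ i ∈ s, f i) ≤ ∑ i ∈ s, ν (f i) := by
  classical
  induction s using Finset.induction_on with
  | empty => simp [hν.zero']
  | insert _ _ hx ih =>
    rename_i a s'
    rw [Finset.sum_insert hx, Finset.sum_insert hx]
    exact (hν.triangle _ _).trans (by linarith)

/-- Upper bound: `ν x ≤ C * ‖x‖` with positive `C`. -/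
theorem exists_upper : ∃ C : ℝ, 0 < C ∧ ∀ x, ν x ≤ C * ‖x‖ := by
  set e : Fin k → (Fin k → ℝ) := fun i => Pi.single i 1 with he
  have hsum : (0:ℝ) ≤ ∑ i, ν (e i) := Finset.sum_nonneg fun i _ => hν.nonneg _
  refine ⟨(∑ i, ν (e i)) + 1, by linarith, fun x => ?_⟩
  have hx : x = ∑ i, x i • e i := by
    ext j; simp [he, Pi.single_apply]
  have h1 : ν x ≤ ∑ i, ν (x i • e i) := by
    conv_lhs => rw [hx]
    exact hν.sum_le _ _
  have h2 : ∀ i : Fin k, ν (x i • e i) ≤ ‖x‖ * ν (e i) := by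
    intro i
    rw [hν.smul]
    exact mul_le_mul_of_nonneg_right (by simpa using norm_le_pi_norm x i) (hν.nonneg _)
  have h3 : ν x ≤ ∑ i, ‖x‖ * ν (e i) := h1.trans (Finset.sum_le_sum fun i _ => h2 i)
  rw [← Finset.mul_sum] at h3
  have : (0:ℝ) ≤ ‖x‖ := norm_nonneg x
  nlinarith

theorem continuous' : Continuous ν := by
  obtain ⟨C, hC, hup⟩ := hν.exists_upper
  have : LipschitzWith (Real.toNNReal C) ν := by
    refine LipschitzWith.of_dist_le_mul fun x y => ?_
    rw [Real.dist_eq, Real.coe_toNNReal C hC.le, dist_eq_norm]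
    have h1 : ν x - ν y ≤ ν (x - y) := by
      have := hν.triangle (x - y) y; simpa using this
    have h2 : ν y - ν x ≤ ν (x - y) := by
      have := hν.triangle (y - x) x
      have h3 : ν (y - x) = ν (x - y) := by rw [← hν.neg' (x - y)]; ring_nf
      simp only [sub_add_cancel] at this; rw [h3] at this; linarith
    have := hup (x - y)
    rw [abs_le]; constructor <;> linarith
  exact this.continuous

/-- Lower bound: `c * ‖x‖ ≤ ν x` with positive `c`. -/
theorem exists_lower : ∃ c : ℝ, 0 < c ∧ ∀ x, c * ‖x‖ ≤ ν x := by
  rcases Nat.eq_zero_or_pos k with hk | hk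
  · refine ⟨1, one_pos, fun x => ?_⟩
    subst hk
    have hx : x = 0 := funext fun i => i.elim0
    rw [hx]
    show 1 * ‖(0 : Fin 0 → ℝ)‖ ≤ ν 0
    rw [hν.zero', norm_zero, mul_zero]
  · have hsph : IsCompact (Metric.sphere (0 : Fin k → ℝ) 1) := isCompact_sphere 0 1
    have hne : (Metric.sphere (0 : Fin k → ℝ) 1).Nonempty := by
      haveI : NeZero k := ⟨hk.ne'⟩
      exact ⟨Pi.single 0 1, by simp [Pi.norm_single]⟩
    obtain ⟨x0, hx0, hmin⟩ := hsph.exists_isMinOn hne hν.continuous'.continuousOn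
    have hx0ne : x0 ≠ 0 := by
      intro h; rw [h] at hx0; simp at hx0
    refine ⟨ν x0, hν.pos x0 hx0ne, fun x => ?_⟩
    rcases eq_or_ne x 0 with rfl | hx
    · simp [hν.zero']
    · have hnx : ‖x‖ ≠ 0 := norm_ne_zero_iff.2 hx
      have hmem : ‖x‖⁻¹ • x ∈ Metric.sphere (0 : Fin k → ℝ) 1 := by
        simp [norm_smul, abs_of_nonneg (inv_nonneg.2 (norm_nonneg x)), inv_mul_cancel₀ hnx]
      have := hmin hmem
      have heq : ν (‖x‖⁻¹ • x) = ‖x‖⁻¹ * ν x := by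
        rw [hν.smul]; congr 1; rw [abs_of_nonneg (inv_nonneg.2 (norm_nonneg x))]
      simp only [IsMinOn, IsMinFilter] at this
      have h2 : ν x0 ≤ ‖x‖⁻¹ * ν x := heq ▸ this
      have hpos : (0:ℝ) < ‖x‖ := (norm_nonneg x).lt_of_ne' hnx
      calc ν x0 * ‖x‖ ≤ (‖x‖⁻¹ * ν x) * ‖x‖ := by nlinarith
        _ = ν x := by field_simp

end IsNorm


namespace IsNorm
variable {k : ℕ} {ν : (Fin k → ℝ) → ℝ} (hν : IsNorm ν)
include hν

theorem dualSet_nonempty (z : Fin k → ℝ) : {r | ∃ x, ν x ≤ 1 ∧ r = z ⬝ᵥ x}.Nonempty :=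
  ⟨z ⬝ᵥ 0, 0, by simp [hν.zero'], rfl⟩

theorem dualSet_bddAbove (z : Fin k → ℝ) : BddAbove {r | ∃ x, ν x ≤ 1 ∧ r = z ⬝ᵥ x} := by
  obtain ⟨c, hc, hlow⟩ := hν.exists_lower
  refine ⟨(∑ i, |z i|) * c⁻¹, fun r hr => ?_⟩
  obtain ⟨x, hx1, rfl⟩ := hr
  have hxb : ‖x‖ ≤ c⁻¹ := by
    have h := hlow x
    rw [← one_div, le_div_iff₀ hc]
    nlinarith
  calc z ⬝ᵥ x ≤ |z ⬝ᵥ x| := le_abs_self _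
    _ ≤ ∑ i, |z i * x i| := Finset.abs_sum_le_sum_abs _ _
    _ = ∑ i, |z i| * |x i| := by simp [abs_mul]
    _ ≤ ∑ i, |z i| * c⁻¹ := Finset.sum_le_sum fun i _ =>
        mul_le_mul_of_nonneg_left (le_trans (by simpa using norm_le_pi_norm x i) hxb) (abs_nonneg _)
    _ = (∑ i, |z i|) * c⁻¹ := by rw [Finset.sum_mul]

theorem le_dual {z x : Fin k → ℝ} (hx : ν x ≤ 1) : z ⬝ᵥ x ≤ dualNorm ν z :=
  le_csSup (hν.dualSet_bddAbove z) ⟨x, hx, rfl⟩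

theorem dual_le {z : Fin k → ℝ} {r : ℝ} (h : ∀ x, ν x ≤ 1 → z ⬝ᵥ x ≤ r) :
    dualNorm ν z ≤ r :=
  csSup_le (hν.dualSet_nonempty z) (fun _ ⟨x, hx, hr⟩ => hr ▸ h x hx)

theorem dual_nonneg (z : Fin k → ℝ) : 0 ≤ dualNorm ν z := by
  have := hν.le_dual (z := z) (x := 0) (by simp [hν.zero'])
  simpa using this

theorem pairing (z x : Fin k → ℝ) : z ⬝ᵥ x ≤ dualNorm ν z * ν x := by
  rcases eq_or_ne x 0 with rfl | hx
  · simp [mul_nonneg (hν.dual_nonneg z) (hν.nonneg 0)]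
  · have hpos : 0 < ν x := hν.pos x hx
    have hmem : ν ((ν x)⁻¹ • x) ≤ 1 := by
      rw [hν.smul, abs_of_nonneg (inv_nonneg.2 hpos.le), inv_mul_cancel₀ hpos.ne']
    have := hν.le_dual (z := z) hmem
    rw [dotProduct_smul] at this
    have h2 : (ν x)⁻¹ * (z ⬝ᵥ x) ≤ dualNorm ν z := by simpa using this
    calc z ⬝ᵥ x = ν x * ((ν x)⁻¹ * (z ⬝ᵥ x)) := by field_simp
      _ ≤ ν x * dualNorm ν z := mul_le_mul_of_nonneg_left h2 hpos.le
      _ = dualNorm ν z * ν x := mul_comm _ _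

theorem dual_neg (z : Fin k → ℝ) : dualNorm ν (-z) = dualNorm ν z := by
  have key : ∀ w : Fin k → ℝ, dualNorm ν (-w) ≤ dualNorm ν w := by
    intro w
    refine hν.dual_le fun x hx => ?_
    have hx' : ν (-x) ≤ 1 := by rw [hν.neg']; exact hx
    have := hν.le_dual (z := w) hx'
    simpa using this
  have h1 := key z
  have h2 := key (-z)
  rw [neg_neg] at h2
  linarith

/-- Subgradient / dual-attaining vector. -/
theorem exists_subgradient (xb : Fin k → ℝ) :
    ∃ g : Fin k → ℝ, (∀ x, g ⬝ᵥ x ≤ ν x) ∧ g ⬝ᵥ xb = ν xb := by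
  rcases eq_or_ne xb 0 with rfl | hx
  · exact ⟨0, fun x => by simpa using hν.nonneg x, by simp [hν.zero']⟩
  · have hN_hom : ∀ c : ℝ, 0 < c → ∀ x, ν (c • x) = c * ν x := fun c hc x => by
      rw [hν.smul, abs_of_pos hc]
    have hf : ∀ x : (LinearPMap.mkSpanSingleton (K := ℝ) (σ := RingHom.id ℝ) xb (ν xb) hx).domain,
        (LinearPMap.mkSpanSingleton (K := ℝ) (σ := RingHom.id ℝ) xb (ν xb) hx) x ≤ ν x := by
      rintro ⟨x, hxmem⟩
      obtain ⟨c, rfl⟩ := Submodule.mem_span_singleton.1 hxmem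
      have happ : (LinearPMap.mkSpanSingleton (K := ℝ) (σ := RingHom.id ℝ) xb (ν xb) hx) ⟨c • xb, hxmem⟩ = c • (ν xb) :=
        LinearPMap.mkSpanSingleton'_apply _ _ _ c _
      rw [happ, smul_eq_mul]
      show c * ν xb ≤ ν (c • xb)
      rw [hν.smul]
      have := hν.nonneg xb
      have habs : c ≤ |c| := le_abs_self c
      nlinarith
    obtain ⟨g, hg1, hg2⟩ := exists_extension_of_le_sublinear
      (LinearPMap.mkSpanSingleton (K := ℝ) (σ := RingHom.id ℝ) xb (ν xb) hx) ν hN_hom hν.triangle hf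
    refine ⟨fun i => g (Pi.single i 1), fun x => ?_, ?_⟩
    · have hrep : g x = ∑ i, x i * g (Pi.single i 1) := by
        have := g.pi_apply_eq_sum_univ x
        rw [this]
        refine Finset.sum_congr rfl fun i _ => ?_
        rw [smul_eq_mul]
        congr 2
        ext j; simp [Pi.single_apply, eq_comm]
      have h0 : (fun i => g (Pi.single i 1)) ⬝ᵥ x = g x := by
        rw [hrep]; simp [dotProduct, mul_comm]
      rw [h0]; exact hg2 x
    · have hrep : (fun i => g (Pi.single i 1)) ⬝ᵥ xb = g xb := by
        have := g.pi_apply_eq_sum_univ xb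
        rw [this, dotProduct]
        refine Finset.sum_congr rfl fun i _ => ?_
        rw [smul_eq_mul, mul_comm]
        congr 2
        ext j; simp [Pi.single_apply, eq_comm]
      rw [hrep]
      have h1 := hg1 ⟨xb, Submodule.mem_span_singleton_self xb⟩
      rw [h1]
      try rw [LinearPMap.mkSpanSingleton_apply]

end IsNorm

namespace IsNorm
variable {k : ℕ} {ν : (Fin k → ℝ) → ℝ} (hν : IsNorm ν)
include hν

theorem dualBall_closed (r : ℝ) : IsClosed {d : Fin k → ℝ | dualNorm ν d ≤ r} := by
  have hset : {d : Fin k → ℝ | dualNorm ν d ≤ r}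
      = ⋂ x : {x : Fin k → ℝ // ν x ≤ 1}, {d | d ⬝ᵥ (x : Fin k → ℝ) ≤ r} := by
    ext d
    simp only [mem_setOf_eq, mem_iInter]
    constructor
    · rintro hd ⟨x, hx⟩
      exact (hν.le_dual hx).trans hd
    · intro h
      exact hν.dual_le fun x hx => h ⟨x, hx⟩
  rw [hset]
  refine isClosed_iInter fun x => ?_
  have hcont : Continuous fun d : Fin k → ℝ => d ⬝ᵥ (x : Fin k → ℝ) := by
    unfold dotProduct
    exact continuous_finset_sum _ fun i _ => (continuous_apply i).mul continuous_const
  exact isClosed_le hcont continuous_const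

theorem dualBall_compact {r : ℝ} (hr : 0 ≤ r) :
    IsCompact {d : Fin k → ℝ | dualNorm ν d ≤ r} := by
  obtain ⟨C, hC, hup⟩ := hν.exists_upper
  refine Metric.isCompact_of_isClosed_isBounded (hν.dualBall_closed r) ?_
  refine (Metric.isBounded_closedBall (x := (0 : Fin k → ℝ)) (r := r * C)).subset ?_
  intro d hd
  rw [Metric.mem_closedBall, dist_zero_right]
  refine pi_norm_le_iff_of_nonneg (by positivity) |>.2 fun i => ?_
  have hei : ‖(Pi.single i 1 : Fin k → ℝ)‖ ≤ 1 := by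
    refine pi_norm_le_iff_of_nonneg one_pos.le |>.2 fun j => ?_
    simp [Pi.single_apply]
    split <;> simp
  have hνei : ν (Pi.single i 1) ≤ C := (hup _).trans (by nlinarith)
  have hpos : 0 < ν (Pi.single i 1) := hν.pos _ (by
    intro h
    have := congrFun h i
    simp at this)
  have key : ∀ s : ℝ, |s| = 1 → d i * s ≤ r * ν (Pi.single i 1) := by
    intro s hs
    have hmem : ν ((ν (Pi.single i 1))⁻¹ • (s • (Pi.single i 1 : Fin k → ℝ))) ≤ 1 := by
      rw [hν.smul, hν.smul, hs, one_mul, abs_of_nonneg (inv_nonneg.2 hpos.le),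
        inv_mul_cancel₀ hpos.ne']
    have h1 := hν.le_dual (z := d) hmem
    have h2 : d ⬝ᵥ ((ν (Pi.single i 1))⁻¹ • (s • (Pi.single i 1 : Fin k → ℝ)))
        = (ν (Pi.single i 1))⁻¹ * (s * d i) := by
      rw [dotProduct_smul, dotProduct_smul]
      simp [dotProduct, Pi.single_apply, Finset.sum_ite_eq', mul_comm]
    rw [h2] at h1
    have h3 : (ν (Pi.single i 1))⁻¹ * (s * d i) ≤ r := h1.trans hd
    calc d i * s = ν (Pi.single i 1) * ((ν (Pi.single i 1))⁻¹ * (s * d i)) := by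
          field_simp
      _ ≤ ν (Pi.single i 1) * r := mul_le_mul_of_nonneg_left h3 hpos.le
      _ = r * ν (Pi.single i 1) := mul_comm _ _
  have k1 := key 1 (by norm_num)
  have k2 := key (-1) (by norm_num)
  rw [Real.norm_eq_abs, abs_le]
  constructor <;> nlinarith

end IsNorm

section Slater
variable {m n : ℕ} {A : Matrix (Fin m) (Fin n) ℝ}
variable {νn : (Fin n → ℝ) → ℝ} {νm : (Fin m → ℝ) → ℝ}

theorem dot_twist (x : Fin n → ℝ) (y : Fin m → ℝ) :
    x ⬝ᵥ (Aᵀ *ᵥ y) = (A *ᵥ x) ⬝ᵥ y := by rw [dotProduct_mulVec, vecMul_transpose]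

theorem slater_dot_neg {y₀ : Fin m → ℝ} (hy₀ : ∀ i, (Aᵀ *ᵥ y₀) i < 0)
    {x : Fin n → ℝ} (hx : ∀ i, 0 ≤ x i) (hxne : x ≠ 0) :
    x ⬝ᵥ (Aᵀ *ᵥ y₀) < 0 := by
  obtain ⟨i₀, hi₀⟩ : ∃ i, 0 < x i := by
    by_contra h
    push_neg at h
    exact hxne (funext fun i => le_antisymm (h i) (hx i))
  have : ∑ i, x i * (Aᵀ *ᵥ y₀) i < ∑ i : Fin n, (0:ℝ) := by
    refine Finset.sum_lt_sum (fun i _ => mul_nonpos_of_nonneg_of_nonpos (hx i) (hy₀ i).le)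
      ⟨i₀, Finset.mem_univ i₀, mul_neg_of_pos_of_neg hi₀ (hy₀ i₀)⟩
  simpa [dotProduct] using this

theorem slater_mulVec_ne {y₀ : Fin m → ℝ} (hy₀ : ∀ i, (Aᵀ *ᵥ y₀) i < 0)
    {x : Fin n → ℝ} (hx : ∀ i, 0 ≤ x i) (hxne : x ≠ 0) : A *ᵥ x ≠ 0 := by
  intro h
  have h1 := slater_dot_neg hy₀ hx hxne
  rw [dot_twist, h] at h1
  simp at h1


theorem mulVec_continuous' : Continuous fun x : Fin n → ℝ => A *ᵥ x :=
  (Matrix.mulVecLin A).continuous_of_finiteDimensional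

/-- Coercivity on the orthant. -/
theorem slater_coercive (hνm : IsNorm νm) {y₀ : Fin m → ℝ} (hy₀ : ∀ i, (Aᵀ *ᵥ y₀) i < 0) :
    ∃ δ : ℝ, 0 < δ ∧ ∀ x : Fin n → ℝ, (∀ i, 0 ≤ x i) → δ * ‖x‖ ≤ νm (A *ᵥ x) := by
  rcases Nat.eq_zero_or_pos n with hn | hn
  · refine ⟨1, one_pos, fun x hx => ?_⟩
    have hx0 : x = 0 := by subst hn; exact funext fun i => i.elim0
    rw [hx0]
    simp [hνm.zero']
  · haveI : NeZero n := ⟨hn.ne'⟩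
    have horth : IsClosed {x : Fin n → ℝ | ∀ i, 0 ≤ x i} := by
      have he : {x : Fin n → ℝ | ∀ i, 0 ≤ x i} = ⋂ i, {x | 0 ≤ x i} := by
        ext x; simp [Set.mem_iInter]
      rw [he]
      exact isClosed_iInter fun i => isClosed_le continuous_const (continuous_apply i)
    set S := {x : Fin n → ℝ | ∀ i, 0 ≤ x i} ∩ {x | ‖x‖ = 1} with hS
    have hScl : IsClosed S :=
      IsClosed.inter horth (isClosed_eq continuous_norm continuous_const)
    have hSb : Bornology.IsBounded S := by
      refine (Metric.isBounded_closedBall (x := (0:Fin n → ℝ)) (r := 1)).subset ?_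
      intro x hx
      rw [Metric.mem_closedBall, dist_zero_right, hx.2]
    have hScomp : IsCompact S := Metric.isCompact_of_isClosed_isBounded hScl hSb
    have hSne : S.Nonempty := by
      refine ⟨Pi.single 0 1, fun i => ?_, by simp [Pi.norm_single]⟩
      by_cases hi : i = 0 <;> simp [Pi.single_apply, hi]
    have hcont : Continuous fun x : Fin n → ℝ => νm (A *ᵥ x) :=
      hνm.continuous'.comp mulVec_continuous'
    obtain ⟨x0, hx0S, hmin⟩ := hScomp.exists_isMinOn hSne hcont.continuousOn
    have hx0ne : x0 ≠ 0 := by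
      intro h
      have := hx0S.2
      rw [h] at this
      simp at this
    have hδ : 0 < νm (A *ᵥ x0) :=
      hνm.pos _ (slater_mulVec_ne hy₀ hx0S.1 hx0ne)
    refine ⟨νm (A *ᵥ x0), hδ, fun x hx => ?_⟩
    rcases eq_or_ne x 0 with rfl | hxne
    · simp [hνm.zero']
    · have hnx : (0:ℝ) < ‖x‖ := norm_pos_iff.2 hxne
      have hmem : ‖x‖⁻¹ • x ∈ S := by
        constructor
        · intro i
          simp only [Pi.smul_apply, smul_eq_mul]
          exact mul_nonneg (inv_nonneg.2 hnx.le) (hx i)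
        · show ‖‖x‖⁻¹ • x‖ = 1
          rw [norm_smul, Real.norm_eq_abs, abs_of_nonneg (inv_nonneg.2 hnx.le),
            inv_mul_cancel₀ hnx.ne']
      have h1 : νm (A *ᵥ x0) ≤ νm (A *ᵥ (‖x‖⁻¹ • x)) := hmin hmem
      rw [Matrix.mulVec_smul, hνm.smul, abs_of_nonneg (inv_nonneg.2 hnx.le)] at h1
      calc νm (A *ᵥ x0) * ‖x‖ ≤ (‖x‖⁻¹ * νm (A *ᵥ x)) * ‖x‖ := by nlinarith
        _ = νm (A *ᵥ x) := by field_simp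

/-- The set `X1` is compact. -/
theorem X1_compact (hνm : IsNorm νm) {y₀ : Fin m → ℝ} (hy₀ : ∀ i, (Aᵀ *ᵥ y₀) i < 0) :
    IsCompact {x : Fin n → ℝ | (∀ i, 0 ≤ x i) ∧ νm (A *ᵥ x) ≤ 1} := by
  obtain ⟨δ, hδ, hco⟩ := slater_coercive hνm hy₀
  have hcont : Continuous fun x : Fin n → ℝ => νm (A *ᵥ x) :=
    hνm.continuous'.comp mulVec_continuous'
  have horth : IsClosed {x : Fin n → ℝ | ∀ i, 0 ≤ x i} := by
    have he : {x : Fin n → ℝ | ∀ i, 0 ≤ x i} = ⋂ i, {x | 0 ≤ x i} := by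
      ext x; simp [Set.mem_iInter]
    rw [he]
    exact isClosed_iInter fun i => isClosed_le continuous_const (continuous_apply i)
  have hseteq : {x : Fin n → ℝ | (∀ i, 0 ≤ x i) ∧ νm (A *ᵥ x) ≤ 1}
      = {x : Fin n → ℝ | ∀ i, 0 ≤ x i} ∩ {x | νm (A *ᵥ x) ≤ 1} := rfl
  rw [hseteq]
  refine Metric.isCompact_of_isClosed_isBounded ?_ ?_
  · exact IsClosed.inter horth (isClosed_le hcont continuous_const)
  · refine (Metric.isBounded_closedBall (x := (0:Fin n → ℝ)) (r := δ⁻¹)).subset ?_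
    rintro x ⟨hx1, hx2⟩
    rw [Metric.mem_closedBall, dist_zero_right]
    have := hco x hx1
    rw [← one_div, le_div_iff₀ hδ]
    have hx2' : νm (A *ᵥ x) ≤ 1 := hx2
    nlinarith

/-- Under the Slater condition the dual feasible set is always nonempty. -/
theorem PAstar_nonempty {y₀ : Fin m → ℝ} (hy₀ : ∀ i, (Aᵀ *ᵥ y₀) i < 0) (c : Fin n → ℝ) :
    ∃ y : Fin m → ℝ, ∀ i, (Aᵀ *ᵥ y) i ≤ c i := by
  rcases isEmpty_or_nonempty (Fin n) with he | hne
  · exact ⟨0, fun i => he.elim i⟩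
  · set t : ℝ := max 0 (Finset.univ.sup' (Finset.univ_nonempty) fun i => c i / (Aᵀ *ᵥ y₀) i)
      with ht
    refine ⟨t • y₀, fun i => ?_⟩
    rw [Matrix.mulVec_smul, Pi.smul_apply, smul_eq_mul]
    have hti : c i / (Aᵀ *ᵥ y₀) i ≤ t :=
      le_max_of_le_right (Finset.le_sup' (fun i => c i / (Aᵀ *ᵥ y₀) i) (Finset.mem_univ i))
    rw [div_le_iff_of_neg (hy₀ i)] at hti
    linarith [hti]
end Slater

namespace IsNorm
variable {k : ℕ} {ν : (Fin k → ℝ) → ℝ} (hν : IsNorm ν)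
include hν

theorem dualBall_convex (r : ℝ) : Convex ℝ {d : Fin k → ℝ | dualNorm ν d ≤ r} := by
  rintro d1 h1 d2 h2 a b ha hb hab
  refine hν.dual_le fun x hx => ?_
  have e1 := hν.le_dual (z := d1) hx
  have e2 := hν.le_dual (z := d2) hx
  have : (a • d1 + b • d2) ⬝ᵥ x = a * (d1 ⬝ᵥ x) + b * (d2 ⬝ᵥ x) := by
    rw [add_dotProduct, smul_dotProduct, smul_dotProduct]; simp
  rw [this]
  have hd1r : dualNorm ν d1 ≤ r := h1
  have hd2r : dualNorm ν d2 ≤ r := h2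
  have f1 : a * (d1 ⬝ᵥ x) ≤ a * r := mul_le_mul_of_nonneg_left (e1.trans hd1r) ha
  have f2 : b * (d2 ⬝ᵥ x) ≤ b * r := mul_le_mul_of_nonneg_left (e2.trans hd2r) hb
  have f3 : a * r + b * r = r := by rw [← add_mul, hab, one_mul]
  linarith

end IsNorm

section KeySep
variable {m n : ℕ} {A : Matrix (Fin m) (Fin n) ℝ}
variable {νn : (Fin n → ℝ) → ℝ} {νm : (Fin m → ℝ) → ℝ}

theorem dot_lt_all {α : ℝ} {b : Fin m → ℝ} (h : ∀ z : Fin m → ℝ, b ⬝ᵥ z < α) : b = 0 := by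
  by_contra hb
  have hbb0 : 0 ≤ b ⬝ᵥ b := Finset.sum_nonneg fun i _ => mul_self_nonneg (b i)
  have hbb : 0 < b ⬝ᵥ b := by
    rcases lt_or_eq_of_le hbb0 with h' | h'
    · exact h'
    · exact absurd (dotProduct_self_eq_zero.1 h'.symm) hb
  have := h ((α / (b ⬝ᵥ b)) • b)
  rw [dotProduct_smul, smul_eq_mul, div_mul_cancel₀ _ hbb.ne'] at this
  exact lt_irrefl _ this

theorem key_sep (hνn : IsNorm νn) (hνm : IsNorm νm)
    {y₀ : Fin m → ℝ} (hy₀ : ∀ i, (Aᵀ *ᵥ y₀) i < 0)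
    {R : ℝ} (hR0 : 0 ≤ R)
    (hR : ∀ x : Fin n → ℝ, (∀ i, 0 ≤ x i) → νm (A *ᵥ x) ≤ 1 → νn x ≤ R)
    (c : Fin n → ℝ) (y : Fin m → ℝ) (c' : Fin n → ℝ)
    (hc' : ∀ i, (Aᵀ *ᵥ y) i ≤ c' i) {ε : ℝ} (hε : 0 < ε) :
    ∃ y'' : Fin m → ℝ, (∀ i, (Aᵀ *ᵥ y'') i ≤ c i) ∧
      dualNorm νm (y - y'') ≤ R * dualNorm νn (c - c') + ε := by
  classical
  set β : ℝ := R * dualNorm νn (c - c') with hβdef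
  have hβ : 0 ≤ β := mul_nonneg hR0 (hνn.dual_nonneg _)
  set r₀ : ℝ := β + ε with hr₀def
  have hr₀ : 0 < r₀ := by positivity
  by_contra hcon
  push_neg at hcon
  -- the closed convex set `Q` and the compact convex set `B`
  set Q : Set ((Fin n → ℝ) × (Fin m → ℝ)) := {p | ∀ i, (Aᵀ *ᵥ p.2) i ≤ p.1 i} with hQdef
  set B : Set ((Fin n → ℝ) × (Fin m → ℝ)) :=
    ({0} : Set (Fin n → ℝ)) ×ˢ {d | dualNorm νm d ≤ r₀} with hBdef
  have hQcl : IsClosed Q := by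
    have he : Q = ⋂ i, {p : (Fin n → ℝ) × (Fin m → ℝ) | (Aᵀ *ᵥ p.2) i ≤ p.1 i} := by
      ext p; simp [hQdef, Set.mem_iInter]
    rw [he]
    refine isClosed_iInter fun i => isClosed_le ?_ ?_
    · exact (continuous_apply i).comp (mulVec_continuous'.comp continuous_snd)
    · exact (continuous_apply i).comp continuous_fst
  have hQconv : Convex ℝ Q := by
    rintro p hp q hq a b ha hb hab
    intro i
    have h1 : (Aᵀ *ᵥ (a • p + b • q).2) i = a * (Aᵀ *ᵥ p.2) i + b * (Aᵀ *ᵥ q.2) i := by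
      simp [Matrix.mulVec_add, Matrix.mulVec_smul]
    have h2 : (a • p + b • q).1 i = a * p.1 i + b * q.1 i := by simp
    rw [h1, h2]
    have := hp i; have := hq i
    have h3 : a * (Aᵀ *ᵥ p.2) i ≤ a * p.1 i := mul_le_mul_of_nonneg_left (hp i) ha
    have h4 : b * (Aᵀ *ᵥ q.2) i ≤ b * q.1 i := mul_le_mul_of_nonneg_left (hq i) hb
    linarith
  have hBcomp : IsCompact B := isCompact_singleton.prod (hνm.dualBall_compact hr₀.le)
  have hBconv : Convex ℝ B := (convex_singleton 0).prod (hνm.dualBall_convex r₀)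
  set K : Set ((Fin n → ℝ) × (Fin m → ℝ)) := Q + B with hKdef
  have hKcl : IsClosed K := by
    have h := hQcl.vadd_right_of_isCompact hBcomp
    have he : Q +ᵥ B = Q + B := by
      ext x; simp [Set.mem_vadd_set, Set.mem_add, vadd_eq_add]
    rwa [he] at h
  have hKconv : Convex ℝ K := hQconv.add hBconv
  have hnotin : ((c, y) : (Fin n → ℝ) × (Fin m → ℝ)) ∉ K := by
    rintro hmem
    obtain ⟨q1, hq1, b1, hb1, hsum⟩ := Set.mem_add.1 hmem
    obtain ⟨hb10, hb1r⟩ := hb1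
    have hq11 : q1.1 = c := by
      have := congrArg Prod.fst hsum
      simp only [Prod.fst_add] at this
      simp only [Set.mem_singleton_iff] at hb10
      rw [hb10] at this
      simpa using this
    have hq12 : y - q1.2 = b1.2 := by
      have := congrArg Prod.snd hsum
      simp only [Prod.snd_add] at this
      linear_combination -this
    have hfeas : ∀ i, (Aᵀ *ᵥ q1.2) i ≤ c i := by
      intro i; have := hq1 i; rwa [hq11] at this
    have := hcon q1.2 hfeas
    rw [hq12] at this
    exact absurd hb1r (not_le.2 this)
  obtain ⟨F, α, hFK, hFcy⟩ := geometric_hahn_banach_closed_point hKconv hKcl hnotin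
  -- decompose the functional
  set p : Fin n → ℝ := fun i => F (Pi.single i 1, 0) with hpdef
  set q : Fin m → ℝ := fun j => F (0, Pi.single j 1) with hqdef
  have hFrep : ∀ (w : Fin n → ℝ) (z : Fin m → ℝ), F (w, z) = p ⬝ᵥ w + q ⬝ᵥ z := by
    intro w z
    have hsplit : ((w, z) : (Fin n → ℝ) × (Fin m → ℝ)) = (w, 0) + (0, z) := by simp
    rw [hsplit, map_add]
    congr 1
    · have L1 : (Fin n → ℝ) →ₗ[ℝ] ℝ := F.toLinearMap.comp (LinearMap.inl ℝ _ _)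
      have hL : ∀ w : Fin n → ℝ, F (w, (0 : Fin m → ℝ))
          = (F.toLinearMap.comp (LinearMap.inl ℝ (Fin n → ℝ) (Fin m → ℝ))) w := fun _ => rfl
      rw [hL w, LinearMap.pi_apply_eq_sum_univ]
      rw [dotProduct]
      refine Finset.sum_congr rfl fun i _ => ?_
      rw [smul_eq_mul]
      have : (fun j => if i = j then (1:ℝ) else 0) = Pi.single i 1 := by
        ext j; simp [Pi.single_apply, eq_comm]
      rw [this, mul_comm]
      congr 1
    · have hL : ∀ z : Fin m → ℝ, F ((0 : Fin n → ℝ), z)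
          = (F.toLinearMap.comp (LinearMap.inr ℝ (Fin n → ℝ) (Fin m → ℝ))) z := fun _ => rfl
      rw [hL z, LinearMap.pi_apply_eq_sum_univ]
      rw [dotProduct]
      refine Finset.sum_congr rfl fun j _ => ?_
      rw [smul_eq_mul]
      have : (fun j' => if j = j' then (1:ℝ) else 0) = Pi.single j 1 := by
        ext j'; simp [Pi.single_apply, eq_comm]
      rw [this, mul_comm]
      congr 1
  have hmemK : ∀ (w : Fin n → ℝ) (z : Fin m → ℝ), (∀ i, (Aᵀ *ᵥ z) i ≤ w i) →
      ((w, z) : (Fin n → ℝ) × (Fin m → ℝ)) ∈ K := by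
    intro w z hw
    refine Set.mem_add.2 ⟨(w, z), hw, (0, 0), ?_, by simp⟩
    refine ⟨rfl, ?_⟩
    show dualNorm νm 0 ≤ r₀
    have h0 : dualNorm νm 0 ≤ 0 := hνm.dual_le fun x _ => by simp
    linarith
  have hα0 : 0 < α := by
    have h0K : ((0, 0) : (Fin n → ℝ) × (Fin m → ℝ)) ∈ K := by
      refine hmemK 0 0 fun i => ?_
      simp [Matrix.mulVec_zero]
    have := hFK _ h0K
    have hF0 : F ((0, 0) : (Fin n → ℝ) × (Fin m → ℝ)) = 0 := by
      have : ((0, 0) : (Fin n → ℝ) × (Fin m → ℝ)) = 0 := rfl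
      rw [this, map_zero]
    linarith [this, hF0.symm.le]
  -- `A p + q = 0`
  have hApq : A *ᵥ p + q = 0 := by
    refine dot_lt_all (α := α) fun z => ?_
    have hz : ((Aᵀ *ᵥ z, z) : (Fin n → ℝ) × (Fin m → ℝ)) ∈ K := hmemK _ z fun i => le_rfl
    have := hFK _ hz
    rw [hFrep] at this
    have hdt : p ⬝ᵥ (Aᵀ *ᵥ z) = (A *ᵥ p) ⬝ᵥ z := dot_twist p z
    rw [hdt] at this
    rwa [add_dotProduct]
  have hpneg : ∀ i, p i ≤ 0 := by
    intro i
    by_contra hpi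
    push_neg at hpi
    have hmem : ((α / p i) • (Pi.single i 1 : Fin n → ℝ), (0 : Fin m → ℝ)) ∈ K := by
      refine hmemK _ 0 fun j => ?_
      rw [Matrix.mulVec_zero]
      have : 0 ≤ (α / p i) • (Pi.single i 1 : Fin n → ℝ) := by
        refine smul_nonneg (by positivity) ?_
        intro j
        by_cases hj : j = i <;> simp [Pi.single_apply, hj]
      exact this j
    have := hFK _ hmem
    rw [hFrep] at this
    rw [dotProduct_smul, dotProduct_zero, add_zero, smul_eq_mul] at this
    have hps : p ⬝ᵥ (Pi.single i 1 : Fin n → ℝ) = p i := by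
      simp [dotProduct, Pi.single_apply, Finset.sum_ite_eq']
    rw [hps, div_mul_cancel₀ _ hpi.ne'] at this
    exact lt_irrefl _ this
  -- the dual attaining direction at `q`
  obtain ⟨dh, hd1, hd2⟩ := hνm.exists_subgradient q
  have hqB : dualNorm νm (r₀ • dh) ≤ r₀ := by
    refine hνm.dual_le fun x hx => ?_
    rw [smul_dotProduct, smul_eq_mul]
    have := (hd1 x).trans hx
    nlinarith
  have hql : r₀ * νm q < α := by
    have hmem : ((0 : Fin n → ℝ), r₀ • dh) ∈ K := by
      refine Set.mem_add.2 ⟨(0, 0), fun i => by simp [Matrix.mulVec_zero], (0, r₀ • dh),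
        ⟨rfl, hqB⟩, by simp⟩
    have := hFK _ hmem
    rw [hFrep, dotProduct_zero, zero_add, dotProduct_smul, smul_eq_mul, dotProduct_comm,
      hd2] at this
    exact this
  have hcy : α < p ⬝ᵥ c + q ⬝ᵥ y := by
    have := hFcy
    rwa [hFrep] at this
  -- set x̃ = -p ≥ 0, q = A x̃
  set xt : Fin n → ℝ := -p with hxt
  have hxtn : ∀ i, 0 ≤ xt i := fun i => by simpa [hxt] using hpneg i
  have hqA : q = A *ᵥ xt := by
    have h5 : q = -(A *ᵥ p) := by
      have := hApq
      have h6 : q = 0 - A *ᵥ p := by rw [← this]; ring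
      rw [h6]; ring
    rw [h5, hxt, Matrix.mulVec_neg]
  have hkey : r₀ * νm (A *ᵥ xt) < xt ⬝ᵥ (Aᵀ *ᵥ y - c) := by
    have h1 : p ⬝ᵥ c + q ⬝ᵥ y = xt ⬝ᵥ (Aᵀ *ᵥ y - c) := by
      rw [hqA, dotProduct_sub]
      have h2 : (A *ᵥ xt) ⬝ᵥ y = xt ⬝ᵥ (Aᵀ *ᵥ y) := (dot_twist xt y).symm
      rw [h2]
      have h3 : p ⬝ᵥ c = -(xt ⬝ᵥ c) := by
        rw [hxt]; simp [neg_dotProduct]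
      rw [h3]; ring
    rw [← h1, ← hqA]
    exact lt_trans hql hcy
  -- upper bound the right side
  have hub : xt ⬝ᵥ (Aᵀ *ᵥ y - c) ≤ dualNorm νn (c - c') * νn xt := by
    have hsplit : (Aᵀ *ᵥ y - c) = (Aᵀ *ᵥ y - c') + (c' - c) := by ring
    rw [hsplit, dotProduct_add]
    have h1 : xt ⬝ᵥ (Aᵀ *ᵥ y - c') ≤ 0 := by
      refine Finset.sum_nonpos fun i _ => ?_
      exact mul_nonpos_of_nonneg_of_nonpos (hxtn i) (by simpa using sub_nonpos.2 (hc' i))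
    have h2 : xt ⬝ᵥ (c' - c) ≤ dualNorm νn (c' - c) * νn xt := by
      rw [dotProduct_comm]
      exact hνn.pairing (c' - c) xt
    have h3 : dualNorm νn (c' - c) = dualNorm νn (c - c') := by
      rw [← hνn.dual_neg (c - c'), neg_sub]
    rw [h3] at h2
    linarith
  rcases eq_or_ne (A *ᵥ xt) 0 with hA0 | hA0
  · rcases eq_or_ne xt 0 with hxt0 | hxt0
    · rw [hxt0] at hkey hA0
      rw [hA0, hνm.zero'] at hkey
      simp at hkey
    · exact absurd hA0 (slater_mulVec_ne hy₀ hxtn hxt0)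
  · have ht : 0 < νm (A *ᵥ xt) := hνm.pos _ hA0
    have hxr : νn xt ≤ R * νm (A *ᵥ xt) := by
      have hmem1 : ∀ i, 0 ≤ ((νm (A *ᵥ xt))⁻¹ • xt) i := fun i =>
        mul_nonneg (inv_nonneg.2 ht.le) (hxtn i)
      have hmem2 : νm (A *ᵥ ((νm (A *ᵥ xt))⁻¹ • xt)) ≤ 1 := by
        rw [Matrix.mulVec_smul, hνm.smul, abs_of_nonneg (inv_nonneg.2 ht.le),
          inv_mul_cancel₀ ht.ne']
      have := hR _ hmem1 hmem2
      rw [hνn.smul, abs_of_nonneg (inv_nonneg.2 ht.le)] at this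
      calc νn xt = νm (A *ᵥ xt) * ((νm (A *ᵥ xt))⁻¹ * νn xt) := by field_simp
        _ ≤ νm (A *ᵥ xt) * R := mul_le_mul_of_nonneg_left this ht.le
        _ = R * νm (A *ᵥ xt) := mul_comm _ _
    have hfin : xt ⬝ᵥ (Aᵀ *ᵥ y - c) ≤ β * νm (A *ᵥ xt) := by
      have h4 : dualNorm νn (c - c') * νn xt ≤ dualNorm νn (c - c') * (R * νm (A *ᵥ xt)) :=
        mul_le_mul_of_nonneg_left hxr (hνn.dual_nonneg _)
      calc xt ⬝ᵥ (Aᵀ *ᵥ y - c) ≤ dualNorm νn (c - c') * νn xt := hub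
        _ ≤ dualNorm νn (c - c') * (R * νm (A *ᵥ xt)) := h4
        _ = β * νm (A *ᵥ xt) := by rw [hβdef]; ring
    have : r₀ * νm (A *ᵥ xt) < β * νm (A *ᵥ xt) := lt_of_lt_of_le hkey hfin
    nlinarith
end KeySep

end AuxHoffman

/-- under the dual Slater condition `Aᵀy < 0`,
`H(P_A*) = max { ‖x‖ : x ≥ 0, ‖Ax‖ ≤ 1 }` (Hoffman constant in the dual norms). -/
theorem stmt14 {m n : ℕ} (A : Matrix (Fin m) (Fin n) ℝ)
    (νn : (Fin n → ℝ) → ℝ) (νm : (Fin m → ℝ) → ℝ) (hνn : IsNorm νn) (hνm : IsNorm νm)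
    (hSlater : ∃ y : Fin m → ℝ, ∀ i, (Aᵀ *ᵥ y) i < 0) :
    hoffmanConst (dualNorm νn) (dualNorm νm) (PAstar A) =
      sSup {r | ∃ x : Fin n → ℝ, (∀ i, 0 ≤ x i) ∧ νm (A *ᵥ x) ≤ 1 ∧ r = νn x} := by
  classical
  obtain ⟨y₀, hy₀⟩ := hSlater
  rcases Nat.eq_zero_or_pos n with hn | hn
  · -- degenerate case `n = 0`
    subst hn
    have hL : {r | ∃ u v, u ∈ domOf (PAstar A) ∧ v ∈ imOf (PAstar A) ∧ v ∉ PAstar A u ∧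
        r = distWith (dualNorm νm) v (PAstar A u) / distWith (dualNorm νn) u
          (invOf (PAstar A) v)} = (∅ : Set ℝ) := by
      ext r
      simp only [mem_setOf_eq, mem_empty_iff_false, iff_false]
      rintro ⟨u, v, _, _, hnot, _⟩
      exact hnot fun i => i.elim0
    have hRs : {r | ∃ x : Fin 0 → ℝ, (∀ i, 0 ≤ x i) ∧ νm (A *ᵥ x) ≤ 1 ∧ r = νn x}
        = {(0 : ℝ)} := by
      ext r
      simp only [mem_setOf_eq, mem_singleton_iff]
      constructor
      · rintro ⟨x, _, _, rfl⟩
        have hx : x = 0 := funext fun i => i.elim0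
        rw [hx, hνn.zero']
      · rintro rfl
        refine ⟨0, fun i => le_rfl, ?_, (hνn.zero').symm⟩
        rw [Matrix.mulVec_zero, hνm.zero']
        norm_num
    unfold hoffmanConst
    rw [hL, hRs, Real.sSup_empty, csSup_singleton]
  · -- main case `n ≥ 1`
    haveI : NeZero n := ⟨hn.ne'⟩
    set Φ := PAstar A with hΦ
    -- the compact set X1 and the maximizer
    set X1 : Set (Fin n → ℝ) := {x | (∀ i, 0 ≤ x i) ∧ νm (A *ᵥ x) ≤ 1} with hX1
    have hX1comp : IsCompact X1 := X1_compact hνm hy₀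
    have hX1ne : X1.Nonempty := ⟨0, fun i => le_rfl, by rw [Matrix.mulVec_zero, hνm.zero']; norm_num⟩
    obtain ⟨xb, hxbX1, hxbmax⟩ := hX1comp.exists_isMaxOn hX1ne hνn.continuous'.continuousOn
    have hxbmax' : ∀ x ∈ X1, νn x ≤ νn xb := fun x hx => hxbmax hx
    set R : ℝ := νn xb with hRdef
    have hR0 : 0 ≤ R := hνn.nonneg xb
    have hRHSval : sSup {r | ∃ x : Fin n → ℝ, (∀ i, 0 ≤ x i) ∧ νm (A *ᵥ x) ≤ 1 ∧ r = νn x}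
        = R := by
      refine IsGreatest.csSup_eq ⟨⟨xb, hxbX1.1, hxbX1.2, rfl⟩, ?_⟩
      rintro r ⟨x, h1, h2, rfl⟩
      exact hxbmax' x ⟨h1, h2⟩
    have hR : ∀ x : Fin n → ℝ, (∀ i, 0 ≤ x i) → νm (A *ᵥ x) ≤ 1 → νn x ≤ R :=
      fun x h1 h2 => hxbmax' x ⟨h1, h2⟩
    -- R > 0
    have hRpos : 0 < R := by
      set e : Fin n → ℝ := Pi.single 0 1 with he
      have hene : e ≠ 0 := by
        intro h
        have := congrFun h 0
        simp [he] at this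
      set t : ℝ := (νm (A *ᵥ e) + 1)⁻¹ with htdef
      have hν0 : 0 ≤ νm (A *ᵥ e) := hνm.nonneg _
      have ht : 0 < t := by positivity
      have hmem : t • e ∈ X1 := by
        constructor
        · intro i
          refine mul_nonneg ht.le ?_
          by_cases hi : i = 0 <;> simp [he, Pi.single_apply, hi]
        · show νm (A *ᵥ (t • e)) ≤ 1
          rw [Matrix.mulVec_smul, hνm.smul, abs_of_pos ht, htdef]
          rw [inv_mul_le_iff₀ (by positivity)]
          linarith
      have hne0 : t • e ≠ 0 := smul_ne_zero ht.ne' hene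
      exact lt_of_lt_of_le (hνn.pos _ hne0) (hxbmax' _ hmem)
    -- basic facts about the mapping
    have hdom : ∀ u : Fin n → ℝ, u ∈ domOf Φ := by
      intro u
      obtain ⟨y, hy⟩ := PAstar_nonempty hy₀ u
      exact ⟨y, hy⟩
    have him : ∀ v : Fin m → ℝ, v ∈ imOf Φ := by
      intro v
      exact Set.mem_iUnion.2 ⟨Aᵀ *ᵥ v, fun i => le_rfl⟩
    -- distances: notation
    have hNnonneg : ∀ (c : Fin n → ℝ) (y : Fin m → ℝ),
        0 ≤ distWith (dualNorm νm) y (Φ c) :=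
      fun c y => Real.sInf_nonneg (by rintro r ⟨s, _, rfl⟩; exact hνm.dual_nonneg _)
    have hDnonneg : ∀ (c : Fin n → ℝ) (y : Fin m → ℝ),
        0 ≤ distWith (dualNorm νn) c (invOf Φ y) :=
      fun c y => Real.sInf_nonneg (by rintro r ⟨s, _, rfl⟩; exact hνn.dual_nonneg _)
    have hNbdd : ∀ (c : Fin n → ℝ) (y : Fin m → ℝ),
        BddBelow ((fun s => dualNorm νm (y - s)) '' (Φ c)) := by
      intro c y
      exact ⟨0, by rintro r ⟨s, _, rfl⟩; exact hνm.dual_nonneg _⟩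
    have hDbdd : ∀ (c : Fin n → ℝ) (y : Fin m → ℝ),
        BddBelow ((fun s => dualNorm νn (c - s)) '' (invOf Φ y)) := by
      intro c y
      exact ⟨0, by rintro r ⟨s, _, rfl⟩; exact hνn.dual_nonneg _⟩
    have hinvne : ∀ y : Fin m → ℝ, (invOf Φ y).Nonempty := by
      intro y
      exact ⟨Aᵀ *ᵥ y, fun i => le_rfl⟩
    -- UPPER BOUND: every ratio is at most R
    have hub : ∀ r ∈ {r | ∃ u v, u ∈ domOf Φ ∧ v ∈ imOf Φ ∧ v ∉ Φ u ∧
        r = distWith (dualNorm νm) v (Φ u) / distWith (dualNorm νn) u (invOf Φ v)},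
        r ≤ R := by
      rintro r ⟨c, y, _, _, _, rfl⟩
      set N : ℝ := distWith (dualNorm νm) y (Φ c) with hN
      set D : ℝ := distWith (dualNorm νn) c (invOf Φ y) with hD
      have h1 : ∀ c' ∈ invOf Φ y, N ≤ R * dualNorm νn (c - c') := by
        intro c' hc'
        refine le_of_forall_pos_le_add fun ε hε => ?_
        obtain ⟨y'', hfeas, hdist⟩ := key_sep hνn hνm hy₀ hR0 hR c y c' hc' hε
        have hmem : dualNorm νm (y - y'') ∈ (fun s => dualNorm νm (y - s)) '' (Φ c) :=
          ⟨y'', hfeas, rfl⟩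
        have := csInf_le (hNbdd c y) hmem
        calc N ≤ dualNorm νm (y - y'') := this
          _ ≤ R * dualNorm νn (c - c') + ε := hdist
      have h2 : N / R ≤ D := by
        refine le_csInf ((hinvne y).image _) ?_
        rintro d ⟨c', hc', rfl⟩
        rw [div_le_iff₀ hRpos]
        calc N ≤ R * dualNorm νn (c - c') := h1 c' hc'
          _ = dualNorm νn (c - c') * R := mul_comm _ _
      have hND : N ≤ R * D := by
        rw [div_le_iff₀ hRpos] at h2
        calc N ≤ D * R := h2
          _ = R * D := mul_comm _ _
      rcases eq_or_lt_of_le (hDnonneg c y) with hD0 | hD0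
      · have hDz : D = 0 := hD.trans hD0.symm
        rw [hDz, div_zero]
        exact hR0
      · rw [div_le_iff₀ hD0]
        calc N ≤ R * D := hND
          _ = R * D := rfl
    -- LOWER BOUND: exhibit a ratio equal to at least R
    obtain ⟨g, hg1, hg2⟩ := hνn.exists_subgradient xb
    have hgR : g ⬝ᵥ xb = R := hg2
    have hgpos : ∃ i, 0 < g i := by
      by_contra h
      push_neg at h
      have : g ⬝ᵥ xb ≤ 0 :=
        Finset.sum_nonpos fun i _ => mul_nonpos_of_nonpos_of_nonneg (h i) (hxbX1.1 i)
      rw [hgR] at this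
      linarith
    obtain ⟨i₀, hi₀⟩ := hgpos
    have hnot : (0 : Fin m → ℝ) ∉ Φ (-g) := by
      intro hmem
      have := hmem i₀
      rw [Matrix.mulVec_zero] at this
      simp only [Pi.zero_apply, Pi.neg_apply] at this
      linarith
    set N₀ : ℝ := distWith (dualNorm νm) 0 (Φ (-g)) with hN₀
    set D₀ : ℝ := distWith (dualNorm νn) (-g) (invOf Φ 0) with hD₀
    have hinv0 : invOf Φ (0 : Fin m → ℝ) = {u : Fin n → ℝ | ∀ i, 0 ≤ u i} := by
      ext u
      show (∀ i, (Aᵀ *ᵥ (0 : Fin m → ℝ)) i ≤ u i) ↔ _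
      rw [Matrix.mulVec_zero]
      rfl
    have hD₀le : D₀ ≤ 1 := by
      have hmem : dualNorm νn (-g - 0) ∈ (fun s => dualNorm νn (-g - s)) '' (invOf Φ 0) := by
        refine ⟨0, ?_, rfl⟩
        rw [hinv0]
        exact fun i => le_rfl
      have h1 : dualNorm νn (-g - 0) ≤ 1 := by
        rw [sub_zero, hνn.dual_neg]
        exact hνn.dual_le fun x hx => (hg1 x).trans hx
      exact (csInf_le (hDbdd (-g) 0) hmem).trans h1
    have hD₀ge : 1 ≤ D₀ := by
      refine le_csInf ((hinvne 0).image _) ?_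
      rintro d ⟨u, hu, rfl⟩
      rw [hinv0] at hu
      set w : Fin n → ℝ := R⁻¹ • xb with hw
      have hwnorm : νn (-w) ≤ 1 := by
        rw [hνn.neg', hw, hνn.smul, abs_of_nonneg (inv_nonneg.2 hR0), ← hRdef,
          inv_mul_cancel₀ hRpos.ne']
      have h1 : (-g - u) ⬝ᵥ (-w) ≤ dualNorm νn (-g - u) := hνn.le_dual hwnorm
      have h2 : (1:ℝ) ≤ (-g - u) ⬝ᵥ (-w) := by
        have e1 : (-g - u) ⬝ᵥ (-w) = g ⬝ᵥ w + u ⬝ᵥ w := by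
          simp only [sub_dotProduct, neg_dotProduct, dotProduct_neg]
          ring
        have e2 : g ⬝ᵥ w = 1 := by
          rw [hw, dotProduct_smul, smul_eq_mul, hgR, inv_mul_cancel₀ hRpos.ne']
        have e3 : 0 ≤ u ⬝ᵥ w := by
          refine Finset.sum_nonneg fun i _ => mul_nonneg (hu i) ?_
          exact mul_nonneg (inv_nonneg.2 hR0) (hxbX1.1 i)
        rw [e1, e2]
        linarith
      linarith
    have hN₀ge : R ≤ N₀ := by
      refine le_csInf ((hdom (-g)).image _) ?_
      rintro d ⟨y', hy', rfl⟩
      have hunit : νm (A *ᵥ xb) ≤ 1 := hxbX1.2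
      have h1 : ((0:Fin m → ℝ) - y') ⬝ᵥ (A *ᵥ xb) ≤ dualNorm νm (0 - y') :=
        hνm.le_dual hunit
      have h2 : R ≤ ((0:Fin m → ℝ) - y') ⬝ᵥ (A *ᵥ xb) := by
        have e1 : ((0:Fin m → ℝ) - y') ⬝ᵥ (A *ᵥ xb) = -(xb ⬝ᵥ (Aᵀ *ᵥ y')) := by
          rw [zero_sub, neg_dotProduct, dotProduct_comm, dot_twist]
        have e2 : xb ⬝ᵥ (Aᵀ *ᵥ y') ≤ xb ⬝ᵥ (-g) := by
          refine Finset.sum_le_sum fun i _ => ?_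
          exact mul_le_mul_of_nonneg_left (hy' i) (hxbX1.1 i)
        have e3 : xb ⬝ᵥ (-g) = -R := by
          rw [dotProduct_neg, dotProduct_comm, hgR]
        rw [e1]
        rw [e3] at e2
        linarith
      linarith
    have hmemS : N₀ / D₀ ∈ {r | ∃ u v, u ∈ domOf Φ ∧ v ∈ imOf Φ ∧ v ∉ Φ u ∧
        r = distWith (dualNorm νm) v (Φ u) / distWith (dualNorm νn) u (invOf Φ v)} :=
      ⟨-g, 0, hdom (-g), him 0, hnot, rfl⟩
    have hD₀1 : D₀ = 1 := le_antisymm hD₀le hD₀ge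
    have hratio : R ≤ N₀ / D₀ := by
      rw [hD₀1, div_one]
      exact hN₀ge
    -- conclude
    have hbdd : BddAbove {r | ∃ u v, u ∈ domOf Φ ∧ v ∈ imOf Φ ∧ v ∉ Φ u ∧
        r = distWith (dualNorm νm) v (Φ u) / distWith (dualNorm νn) u (invOf Φ v)} :=
      ⟨R, hub⟩
    have hle : hoffmanConst (dualNorm νn) (dualNorm νm) Φ ≤ R :=
      csSup_le ⟨_, hmemS⟩ hub
    have hge : R ≤ hoffmanConst (dualNorm νn) (dualNorm νm) Φ :=
      hratio.trans (le_csSup hbdd hmemS)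
    rw [hRHSval]
    exact le_antisymm hle hge
end

section
/- Let Φ: ℝ^p ⇉ ℝ^q be a polyhedral sublinear set-valued mapping and let ū ∈ dom(Φ). Then the following minimax identity holds: min_{v ∈ Φ(ū)} ‖v‖ = max { ⟨z, ū⟩ : w ∈ ℝ^q, ‖w‖* ≤ 1, z ∈ Φ*(w) }. -/
open Matrix Set

section Aux
variable {n : ℕ} {ν : (Fin n → ℝ) → ℝ}

lemma IsNorm.zero (hν : IsNorm ν) : ν 0 = 0 := (hν.eq_zero_iff 0).2 rfl

lemma IsNorm.sum_le_s15 (hν : IsNorm ν) {ι : Type*} (s : Finset ι) (g : ι → Fin n → ℝ) :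
    ν (∑ i ∈ s, g i) ≤ ∑ i ∈ s, ν (g i) := by
  classical
  induction s using Finset.cons_induction with
  | empty => simp [hν.zero]
  | cons a s ha ih =>
      rw [Finset.sum_cons, Finset.sum_cons]
      exact le_trans (hν.triangle _ _) (by linarith)

lemma IsNorm.le_sum_abs (hν : IsNorm ν) (x : Fin n → ℝ) :
    ν x ≤ ∑ i, |x i| * ν (Pi.single i 1) := by
  have hx : x = ∑ i, x i • (Pi.single i 1 : Fin n → ℝ) := by
    funext j
    simp [Finset.sum_apply, Pi.single_apply, mul_ite, Finset.sum_ite_eq]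
  calc ν x = ν (∑ i, x i • (Pi.single i 1 : Fin n → ℝ)) := by rw [← hx]
    _ ≤ ∑ i, ν (x i • (Pi.single i 1 : Fin n → ℝ)) := hν.sum_le_s15 _ _
    _ = ∑ i, |x i| * ν (Pi.single i 1) := by simp [hν.smul]

lemma IsNorm.le_const_norm (hν : IsNorm ν) (x : Fin n → ℝ) :
    ν x ≤ (∑ i, ν (Pi.single i 1)) * ‖x‖ := by
  refine le_trans (hν.le_sum_abs x) ?_
  rw [Finset.sum_mul]
  refine Finset.sum_le_sum fun i _ => ?_
  rw [mul_comm (ν _)]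
  exact mul_le_mul_of_nonneg_right (by simpa using norm_le_pi_norm x i) (hν.nonneg _)

lemma IsNorm.continuous (hν : IsNorm ν) : Continuous ν := by
  set C := (∑ i, ν (Pi.single i (1:ℝ))) with hC
  have hC0 : 0 ≤ C := Finset.sum_nonneg fun i _ => hν.nonneg _
  rw [Metric.continuous_iff]
  intro x ε hε
  refine ⟨ε / (C + 1), by positivity, fun y hy => ?_⟩
  have h1 : ν (y - x) ≤ C * ‖y - x‖ := hν.le_const_norm _
  have h2 : ν y ≤ ν x + ν (y - x) := by
    have := hν.triangle x (y - x); simpa using this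
  have h3 : ν x ≤ ν y + ν (y - x) := by
    have := hν.triangle y (x - y)
    have hxy : ν (x - y) = ν (y - x) := by
      have : x - y = (-1 : ℝ) • (y - x) := by ring_nf; module
      rw [this, hν.smul]; simp
    simp only [add_sub_cancel] at this
    linarith
  have h4 : ‖y - x‖ = dist y x := by rw [dist_eq_norm]
  have h5 : dist (ν y) (ν x) ≤ C * dist y x := by
    rw [Real.dist_eq, abs_le]
    constructor <;> nlinarith
  calc dist (ν y) (ν x) ≤ C * dist y x := h5
    _ ≤ C * (ε / (C + 1)) := by
        exact mul_le_mul_of_nonneg_left hy.le hC0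
    _ < ε := by
        rw [mul_div_assoc', div_lt_iff₀ (by linarith)]
        nlinarith

lemma IsNorm.exists_lower_s15 (hν : IsNorm ν) : ∃ c > 0, ∀ x, c * ‖x‖ ≤ ν x := by
  rcases Nat.eq_zero_or_pos n with hn | hn
  · refine ⟨1, one_pos, fun x => ?_⟩
    subst hn
    have : x = 0 := funext fun i => absurd i.2 (by simp)
    rw [this, hν.zero, norm_zero, mul_zero]
  · have hnt : Nontrivial (Fin n → ℝ) := by
      refine ⟨Pi.single ⟨0, hn⟩ 1, 0, fun h => ?_⟩
      have := congrFun h ⟨0, hn⟩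
      simp at this
    have hsph : (Metric.sphere (0 : Fin n → ℝ) 1).Nonempty :=
      NormedSpace.sphere_nonempty.2 zero_le_one
    obtain ⟨x₀, hx₀, hmin⟩ := (isCompact_sphere (0 : Fin n → ℝ) 1).exists_isMinOn hsph
      hν.continuous.continuousOn
    have hx₀n : ‖x₀‖ = 1 := by simpa using hx₀
    have hx₀0 : x₀ ≠ 0 := by intro h; rw [h] at hx₀n; simp at hx₀n
    have hc : 0 < ν x₀ := lt_of_le_of_ne (hν.nonneg _)
      (fun h => hx₀0 ((hν.eq_zero_iff x₀).1 h.symm))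
    refine ⟨ν x₀, hc, fun x => ?_⟩
    rcases eq_or_ne x 0 with rfl | hx
    · simp [hν.zero]
    · have hxn : 0 < ‖x‖ := norm_pos_iff.2 hx
      have hmem : ‖x‖⁻¹ • x ∈ Metric.sphere (0 : Fin n → ℝ) 1 := by
        simp [norm_smul, abs_of_pos (inv_pos.2 hxn), inv_mul_cancel₀ hxn.ne']
      have := hmin hmem
      rw [IsMinOn] at *
      have h2 : ν x₀ ≤ ν (‖x‖⁻¹ • x) := this
      rw [hν.smul, abs_of_pos (inv_pos.2 hxn)] at h2
      calc ν x₀ * ‖x‖ ≤ (‖x‖⁻¹ * ν x) * ‖x‖ :=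
            mul_le_mul_of_nonneg_right h2 hxn.le
        _ = ν x := by field_simp

lemma IsNorm.dual_mem_zero (hν : IsNorm ν) (w : Fin n → ℝ) :
    (0:ℝ) ∈ {r | ∃ x, ν x ≤ 1 ∧ r = w ⬝ᵥ x} :=
  ⟨0, by simp [hν.zero], by simp⟩

lemma IsNorm.bddAbove_dual (hν : IsNorm ν) (w : Fin n → ℝ) :
    BddAbove {r | ∃ x, ν x ≤ 1 ∧ r = w ⬝ᵥ x} := by
  obtain ⟨c, hc, hlow⟩ := hν.exists_lower_s15
  refine ⟨(∑ i, |w i|) * c⁻¹, fun r hr => ?_⟩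
  obtain ⟨x, hx1, rfl⟩ := hr
  have hxn : ‖x‖ ≤ c⁻¹ := by
    have h := le_trans (hlow x) hx1
    rw [← mul_le_mul_iff_right₀ hc, mul_inv_cancel₀ hc.ne']
    exact h
  calc w ⬝ᵥ x ≤ ∑ i, |w i| * |x i| := by
        refine Finset.sum_le_sum fun i _ => ?_
        calc w i * x i ≤ |w i * x i| := le_abs_self _
          _ = |w i| * |x i| := abs_mul _ _
    _ ≤ ∑ i, |w i| * c⁻¹ := by
        refine Finset.sum_le_sum fun i _ => mul_le_mul_of_nonneg_left ?_ (abs_nonneg _)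
        exact le_trans (by simpa using norm_le_pi_norm x i) hxn
    _ = (∑ i, |w i|) * c⁻¹ := by rw [Finset.sum_mul]

lemma IsNorm.dualNorm_nonneg (hν : IsNorm ν) (w : Fin n → ℝ) : 0 ≤ dualNorm ν w :=
  le_csSup (hν.bddAbove_dual w) (hν.dual_mem_zero w)

lemma IsNorm.dot_le_dual (hν : IsNorm ν) (w x : Fin n → ℝ) :
    w ⬝ᵥ x ≤ dualNorm ν w * ν x := by
  rcases eq_or_lt_of_le (hν.nonneg x) with h0 | h0
  · have : x = 0 := (hν.eq_zero_iff x).1 h0.symm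
    simp [this, hν.zero]
  · have hmem : w ⬝ᵥ ((ν x)⁻¹ • x) ∈ {r | ∃ y, ν y ≤ 1 ∧ r = w ⬝ᵥ y} :=
      ⟨(ν x)⁻¹ • x, by rw [hν.smul, abs_of_pos (inv_pos.2 h0), inv_mul_cancel₀ h0.ne'], rfl⟩
    have hle : w ⬝ᵥ ((ν x)⁻¹ • x) ≤ dualNorm ν w := le_csSup (hν.bddAbove_dual w) hmem
    rw [dotProduct_smul] at hle
    calc w ⬝ᵥ x = ((ν x)⁻¹ * (w ⬝ᵥ x)) * ν x := by field_simp
      _ ≤ dualNorm ν w * ν x := mul_le_mul_of_nonneg_right hle h0.le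

lemma IsNorm.convex_ball (hν : IsNorm ν) (r : ℝ) : Convex ℝ {x | ν x < r} := by
  intro x hx y hy a b ha hb hab
  have h1 : ν (a • x + b • y) ≤ ν (a • x) + ν (b • y) := hν.triangle _ _
  rw [hν.smul, hν.smul, abs_of_nonneg ha, abs_of_nonneg hb] at h1
  have : a * ν x + b * ν y < r := by
    rcases eq_or_lt_of_le ha with rfl0 | ha'
    · have : a = 0 := rfl0.symm
      subst this
      simp only [zero_mul, zero_add]
      have hb1 : b = 1 := by linarith
      subst hb1
      simpa using hy
    · rcases eq_or_lt_of_le hb with rfl0 | hb'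
      · have : b = 0 := rfl0.symm
        subst this
        have ha1 : a = 1 := by linarith
        subst ha1
        simpa using hx
      · calc a * ν x + b * ν y < a * r + b * r := by
              exact add_lt_add (by exact (mul_lt_mul_iff_right₀ ha').2 hx)
                ((mul_lt_mul_iff_right₀ hb').2 hy)
          _ = r := by rw [← add_mul, hab, one_mul]
  exact lt_of_le_of_lt h1 this

lemma linear_eq_dot {m : ℕ} (f : (Fin m → ℝ) →ₗ[ℝ] ℝ) (x : Fin m → ℝ) :
    f x = (fun j => f (Pi.single j 1)) ⬝ᵥ x := by
  have hx : x = ∑ i, x i • (Pi.single i 1 : Fin m → ℝ) := by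
    funext j
    simp [Finset.sum_apply, Pi.single_apply, mul_ite, Finset.sum_ite_eq]
  conv_lhs => rw [hx]
  rw [map_sum]
  simp [dotProduct, mul_comm]

end Aux

section Cone

variable {ι : Type*} [Fintype ι]

lemma conic_caratheodory {E : Type*} [AddCommGroup E] [Module ℝ E] (v : ι → E) :
    ∀ (N : ℕ) (lam : ι → ℝ), (∀ i, 0 ≤ lam i) →
      (Finset.univ.filter fun i => lam i ≠ 0).card ≤ N →
      ∃ mu : ι → ℝ, (∀ i, 0 ≤ mu i) ∧ ∑ i, mu i • v i = ∑ i, lam i • v i ∧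
        LinearIndependent ℝ (fun s : {i // mu i ≠ 0} => v s.1) := by
  classical
  intro N
  induction N with
  | zero =>
      intro lam h0 hcard
      have hall : ∀ i, lam i = 0 := by
        intro i
        by_contra hi
        have hmem : i ∈ Finset.univ.filter fun i => lam i ≠ 0 := by simp [hi]
        have := Finset.card_pos.2 ⟨i, hmem⟩
        omega
      refine ⟨lam, h0, rfl, ?_⟩
      have : IsEmpty {i // lam i ≠ 0} := ⟨fun s => s.2 (hall s.1)⟩
      exact linearIndependent_empty_type
  | succ N ih =>
      intro lam h0 hcard
      by_cases hli : LinearIndependent ℝ (fun s : {i // lam i ≠ 0} => v s.1)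
      · exact ⟨lam, h0, rfl, hli⟩
      · obtain ⟨g, hgsum, s0, hs0pos⟩ : ∃ g : {i // lam i ≠ 0} → ℝ,
            (∑ s, g s • v s.1 = 0) ∧ ∃ s, 0 < g s := by
          obtain ⟨g, hgsum, s0, hs0⟩ := Fintype.not_linearIndependent_iff.1 hli
          rcases hs0.lt_or_gt with hneg | hpos
          · refine ⟨-g, ?_, s0, by simpa using hneg⟩
            have : ∑ s, (-g) s • v s.1 = -∑ s, g s • v s.1 := by
              simp [neg_smul]
            rw [this, hgsum, neg_zero]
          · exact ⟨g, hgsum, s0, hpos⟩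
        set ghat : ι → ℝ := fun i => if h : lam i ≠ 0 then g ⟨i, h⟩ else 0 with hghat
        have hghat_lam : ∀ i, lam i = 0 → ghat i = 0 := by
          intro i hi; simp [hghat, hi]
        have hghat_sum : ∑ i, ghat i • v i = 0 := by
          have h1 : ∑ i ∈ Finset.univ.filter (fun i => lam i ≠ 0), ghat i • v i
              = ∑ i, ghat i • v i := by
            refine Finset.sum_filter_of_ne fun i _ hne hlam => ?_
            exact hne (by rw [hghat_lam i hlam, zero_smul])
          have h2 : ∑ i ∈ Finset.univ.filter (fun i => lam i ≠ 0), ghat i • v i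
              = ∑ s : {i // lam i ≠ 0}, ghat s.1 • v s.1 :=
            Finset.sum_subtype _ (by simp) _
          rw [← h1, h2]
          rw [← hgsum]
          refine Finset.sum_congr rfl fun s _ => ?_
          have : ghat s.1 = g s := by simp [hghat, s.2]
          rw [this]
        -- choose the minimizing index
        have hP : (Finset.univ.filter fun i => 0 < ghat i).Nonempty := by
          refine ⟨s0.1, ?_⟩
          simp only [Finset.mem_filter, Finset.mem_univ, true_and]
          have : ghat s0.1 = g s0 := by simp [hghat, s0.2]
          rw [this]; exact hs0pos
        obtain ⟨istar, histar, hmin⟩ :=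
          Finset.exists_min_image _ (fun i => lam i / ghat i) hP
        simp only [Finset.mem_filter, Finset.mem_univ, true_and] at histar
        set t : ℝ := lam istar / ghat istar with ht
        have ht0 : 0 ≤ t := div_nonneg (h0 _) histar.le
        set mu : ι → ℝ := fun i => lam i - t * ghat i with hmu
        have hmu0 : ∀ i, 0 ≤ mu i := by
          intro i
          rcases lt_or_ge 0 (ghat i) with hg | hg
          · have := hmin i (by simp [hg])
            have h2 : t * ghat i ≤ lam i := by
              rw [ht]
              calc lam istar / ghat istar * ghat i ≤ lam i / ghat i * ghat i := by
                    exact mul_le_mul_of_nonneg_right this hg.le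
                _ = lam i := div_mul_cancel₀ _ hg.ne'
            simp [hmu]; linarith
          · have : t * ghat i ≤ 0 := mul_nonpos_of_nonneg_of_nonpos ht0 hg
            have := h0 i
            simp [hmu]; linarith
        have hmusum : ∑ i, mu i • v i = ∑ i, lam i • v i := by
          have h2 : ∑ i, (t * ghat i) • v i = (0 : E) := by
            have h3 : ∑ i, (t * ghat i) • v i = t • ∑ i, ghat i • v i := by
              rw [Finset.smul_sum]
              exact Finset.sum_congr rfl fun i _ => (smul_smul t (ghat i) (v i)).symm
            rw [h3, hghat_sum, smul_zero]
          simp only [hmu, sub_smul]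
          rw [Finset.sum_sub_distrib, h2, sub_zero]
        have hmustar : mu istar = 0 := by
          simp only [hmu, ht]
          rw [div_mul_cancel₀ _ (ne_of_gt histar)]
          ring
        have hsubset : (Finset.univ.filter fun i => mu i ≠ 0)
            ⊂ Finset.univ.filter fun i => lam i ≠ 0 := by
          refine Finset.ssubset_iff_of_subset ?_ |>.2 ?_
          · intro i hi
            simp only [Finset.mem_filter, Finset.mem_univ, true_and] at hi ⊢
            intro hlam
            exact hi (by simp [hmu, hlam, hghat_lam i hlam])
          · refine ⟨istar, ?_, ?_⟩
            · simp only [Finset.mem_filter, Finset.mem_univ, true_and]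
              intro hlam
              rw [hghat_lam istar hlam] at histar
              exact lt_irrefl 0 histar
            · simp [hmustar]
        have hcard' : (Finset.univ.filter fun i => mu i ≠ 0).card ≤ N := by
          have := Finset.card_lt_card hsubset
          omega
        obtain ⟨mu', h1, h2, h3⟩ := ih mu hmu0 hcard'
        exact ⟨mu', h1, by rw [h2, hmusum], h3⟩

lemma isClosed_fg_cone {m : ℕ} (v : ι → (Fin m → ℝ)) :
    IsClosed {x | ∃ lam : ι → ℝ, (∀ i, 0 ≤ lam i) ∧ x = ∑ i, lam i • v i} := by
  classical
  have hset : {x | ∃ lam : ι → ℝ, (∀ i, 0 ≤ lam i) ∧ x = ∑ i, lam i • v i}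
      = ⋃ s : Finset ι,
        (if LinearIndependent ℝ (fun i : {i // i ∈ s} => v i.1) then
          (fun (mu : {i // i ∈ s} → ℝ) => ∑ i, mu i • v i.1) '' {mu | ∀ i, 0 ≤ mu i}
        else ∅) := by
    ext x
    simp only [mem_setOf_eq, mem_iUnion]
    constructor
    · rintro ⟨lam, hlam0, rfl⟩
      obtain ⟨mu, hmu0, hmusum, hli⟩ := conic_caratheodory v
        (Finset.univ.filter fun i => lam i ≠ 0).card lam hlam0 le_rfl
      set s : Finset ι := Finset.univ.filter fun i => mu i ≠ 0 with hs
      have hmem : ∀ i, i ∈ s ↔ mu i ≠ 0 := by intro i; simp [hs]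
      have hli' : LinearIndependent ℝ (fun i : {i // i ∈ s} => v i.1) := by
        have hcomp : (fun s : {i // mu i ≠ 0} => v s.1) ∘ (Equiv.subtypeEquivRight hmem)
            = fun i : {i // i ∈ s} => v i.1 := by
          funext i
          show v ((Equiv.subtypeEquivRight hmem) i).1 = v i.1
          rw [Equiv.subtypeEquivRight_apply]
        exact hcomp ▸ hli.comp _ (Equiv.subtypeEquivRight hmem).injective
      refine ⟨s, ?_⟩
      rw [if_pos hli']
      refine ⟨fun i => mu i.1, fun i => hmu0 i.1, ?_⟩
      show (∑ i : {i // i ∈ s}, mu i.1 • v i.1) = ∑ i : ι, lam i • v i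
      rw [← hmusum]
      rw [Finset.sum_coe_sort s (fun i => mu i • v i)]
      refine Finset.sum_subset (Finset.subset_univ s) fun i _ hi => ?_
      have hmuz : mu i = 0 := by
        by_contra h
        exact hi (by simp [hs, h])
      rw [hmuz, zero_smul]
    · rintro ⟨s, hx⟩
      by_cases hli : LinearIndependent ℝ (fun i : {i // i ∈ s} => v i.1)
      · rw [if_pos hli] at hx
        obtain ⟨mu, hmu0, rfl⟩ := hx
        refine ⟨fun i => if h : i ∈ s then mu ⟨i, h⟩ else 0, fun i => ?_, ?_⟩
        · by_cases h : i ∈ s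
          · simpa [h] using hmu0 ⟨i, h⟩
          · simp [h]
        · show (∑ i : {i // i ∈ s}, mu i • v i.1)
            = ∑ i : ι, (if h : i ∈ s then mu ⟨i, h⟩ else 0) • v i
          have h1 : ∑ i : ι, (if h : i ∈ s then mu ⟨i, h⟩ else 0) • v i
              = ∑ i ∈ s, (if h : i ∈ s then mu ⟨i, h⟩ else 0) • v i :=
            (Finset.sum_subset (Finset.subset_univ s) (fun i _ hi => by simp [hi])).symm
          rw [h1, ← Finset.sum_coe_sort s
            (fun i => (if h : i ∈ s then mu ⟨i, h⟩ else 0) • v i)]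
          refine Finset.sum_congr rfl fun i _ => ?_
          rw [dif_pos i.2]
      · rw [if_neg hli] at hx
        exact absurd hx (notMem_empty x)
  rw [hset]
  refine isClosed_iUnion_of_finite fun s => ?_
  by_cases hli : LinearIndependent ℝ (fun i : {i // i ∈ s} => v i.1)
  · rw [if_pos hli]
    set L : ({i // i ∈ s} → ℝ) →ₗ[ℝ] (Fin m → ℝ) :=
      { toFun := fun mu => ∑ i, mu i • v i.1
        map_add' := by intro a b; simp [add_smul, Finset.sum_add_distrib]
        map_smul' := by intro c a; simp [smul_smul, Finset.smul_sum] } with hL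
    have hker : LinearMap.ker L = ⊥ := by
      rw [LinearMap.ker_eq_bot']
      intro mu hmu
      have := Fintype.linearIndependent_iff.1 hli mu hmu
      funext i
      exact this i
    have hemb := LinearMap.isClosedEmbedding_of_injective hker
    have hclosed : IsClosed {mu : {i // i ∈ s} → ℝ | ∀ i, 0 ≤ mu i} := by
      have : {mu : {i // i ∈ s} → ℝ | ∀ i, 0 ≤ mu i}
          = ⋂ i, {mu : {i // i ∈ s} → ℝ | 0 ≤ mu i} := by ext; simp
      rw [this]
      exact isClosed_iInter fun i => isClosed_le continuous_const (continuous_apply i)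
    exact hemb.isClosedMap _ hclosed
  · rw [if_neg hli]
    exact isClosed_empty


lemma farkas_mem {m : ℕ} (a : ι → (Fin m → ℝ)) (c : Fin m → ℝ)
    (h : ∀ y, (∀ i, 0 ≤ a i ⬝ᵥ y) → 0 ≤ c ⬝ᵥ y) :
    ∃ lam : ι → ℝ, (∀ i, 0 ≤ lam i) ∧ c = ∑ i, lam i • a i := by
  classical
  set K := {x | ∃ lam : ι → ℝ, (∀ i, 0 ≤ lam i) ∧ x = ∑ i, lam i • a i} with hK
  by_contra hcon
  have hcK : c ∉ K := fun ⟨lam, h1, h2⟩ => hcon ⟨lam, h1, h2⟩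
  have hKconv : Convex ℝ K := by
    rintro x ⟨lx, hlx, rfl⟩ y ⟨ly, hly, rfl⟩ α β hα hβ hαβ
    refine ⟨fun i => α * lx i + β * ly i,
      fun i => add_nonneg (mul_nonneg hα (hlx i)) (mul_nonneg hβ (hly i)), ?_⟩
    rw [Finset.smul_sum, Finset.smul_sum, ← Finset.sum_add_distrib]
    exact (Finset.sum_congr rfl fun i _ => by
      rw [add_smul, smul_smul, smul_smul]).symm
  have hKcl : IsClosed K := isClosed_fg_cone a
  obtain ⟨f, u, hfK, hfc⟩ := geometric_hahn_banach_closed_point hKconv hKcl hcK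
  have h0K : (0 : Fin m → ℝ) ∈ K := ⟨0, fun i => le_refl 0, by simp⟩
  have hu : 0 < u := by simpa using hfK 0 h0K
  have hcone : ∀ x ∈ K, ∀ t : ℝ, 0 ≤ t → t • x ∈ K := by
    rintro x ⟨l, hl, rfl⟩ t ht
    refine ⟨fun i => t * l i, fun i => mul_nonneg ht (hl i), ?_⟩
    rw [Finset.smul_sum]
    exact Finset.sum_congr rfl fun i _ => by rw [smul_smul]
  have hfle : ∀ x ∈ K, f x ≤ 0 := by
    intro x hx
    by_contra hpos
    push_neg at hpos
    have hmem := hcone x hx (2 * u / f x) (by positivity)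
    have := hfK _ hmem
    rw [f.map_smul, smul_eq_mul, div_mul_cancel₀ _ hpos.ne'] at this
    linarith
  set yv : Fin m → ℝ := fun j => f (Pi.single j 1) with hyv
  have hrep : ∀ x, f x = yv ⬝ᵥ x := fun x => linear_eq_dot (f : (Fin m → ℝ) →ₗ[ℝ] ℝ) x
  have haK : ∀ i, a i ∈ K := by
    intro i
    refine ⟨fun k => if k = i then 1 else 0, fun k => by positivity, ?_⟩
    simp [ite_smul]
  have happ : ∀ i, 0 ≤ a i ⬝ᵥ (-yv) := by
    intro i
    have h1 : f (a i) ≤ 0 := hfle _ (haK i)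
    rw [hrep] at h1
    rw [dotProduct_neg, dotProduct_comm]
    linarith
  have := h (-yv) happ
  rw [dotProduct_neg, dotProduct_comm, ← hrep] at this
  linarith

lemma snoc_dot {m : ℕ} (a : Fin m → ℝ) (r : ℝ) (y : Fin (m+1) → ℝ) :
    (Fin.snoc a r : Fin (m+1) → ℝ) ⬝ᵥ y = a ⬝ᵥ Fin.init y + r * y (Fin.last m) := by
  rw [dotProduct]
  rw [Fin.sum_univ_castSucc]
  simp [dotProduct, Fin.init, Fin.snoc_castSucc]

lemma farkas_affine {m : ℕ} (a : ι → (Fin m → ℝ)) (d : ι → ℝ) (c : Fin m → ℝ) (β : ℝ)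
    (hfeas : ∃ v, ∀ i, a i ⬝ᵥ v ≤ d i)
    (hbound : ∀ v, (∀ i, a i ⬝ᵥ v ≤ d i) → c ⬝ᵥ v ≤ β) :
    ∃ lam : ι → ℝ, (∀ i, 0 ≤ lam i) ∧ c = ∑ i, lam i • a i ∧ ∑ i, lam i * d i ≤ β := by
  classical
  set g : Option ι → (Fin (m+1) → ℝ) := fun o =>
    Option.elim o (Fin.snoc 0 1) (fun i => Fin.snoc (a i) (d i)) with hg
  have hmain : ∀ y : Fin (m+1) → ℝ, (∀ o, 0 ≤ g o ⬝ᵥ y) →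
      0 ≤ (Fin.snoc c β : Fin (m+1) → ℝ) ⬝ᵥ y := by
    intro y hy
    have hti : (0:ℝ) ≤ y (Fin.last m) := by
      have := hy none
      rw [hg] at this
      simpa [snoc_dot] using this
    have hyi : ∀ i, 0 ≤ a i ⬝ᵥ Fin.init y + d i * y (Fin.last m) := by
      intro i
      have := hy (some i)
      rw [hg] at this
      simpa [snoc_dot] using this
    rw [snoc_dot]
    set v := Fin.init y with hv
    set t := y (Fin.last m) with htdef
    rcases eq_or_lt_of_le hti with ht0 | htpos
    · -- t = 0
      by_contra hneg
      push_neg at hneg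
      rw [← ht0, mul_zero, add_zero] at hneg
      obtain ⟨v₀, hv₀⟩ := hfeas
      have hcv0 : c ⬝ᵥ v₀ ≤ β := hbound v₀ hv₀
      have hav : ∀ i, 0 ≤ a i ⬝ᵥ v := by
        intro i
        have := hyi i
        rw [← ht0, mul_zero, add_zero] at this
        exact this
      set s := (c ⬝ᵥ v₀ - β - 1) / (c ⬝ᵥ v) with hs
      have hspos : 0 < s := div_pos_of_neg_of_neg (by linarith) hneg
      have hfeas2 : ∀ i, a i ⬝ᵥ (v₀ - s • v) ≤ d i := by
        intro i
        rw [dotProduct_sub, dotProduct_smul, smul_eq_mul]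
        have : 0 ≤ s * (a i ⬝ᵥ v) := mul_nonneg hspos.le (hav i)
        linarith [hv₀ i]
      have := hbound _ hfeas2
      rw [dotProduct_sub, dotProduct_smul, smul_eq_mul, hs,
        div_mul_cancel₀ _ hneg.ne] at this
      linarith
    · -- t > 0
      have h2 : t * t⁻¹ = 1 := mul_inv_cancel₀ htpos.ne'
      have hfeas2 : ∀ i, a i ⬝ᵥ ((-t⁻¹) • v) ≤ d i := by
        intro i
        rw [dotProduct_smul, smul_eq_mul]
        have h1 := hyi i
        have h4 : -(a i ⬝ᵥ v) ≤ d i * t := by linarith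
        calc -t⁻¹ * (a i ⬝ᵥ v) = t⁻¹ * (-(a i ⬝ᵥ v)) := by ring
          _ ≤ t⁻¹ * (d i * t) := mul_le_mul_of_nonneg_left h4 (inv_nonneg.2 htpos.le)
          _ = d i * (t * t⁻¹) := by ring
          _ = d i := by rw [h2, mul_one]
      have hb := hbound _ hfeas2
      rw [dotProduct_smul, smul_eq_mul] at hb
      have h6 : t * (-t⁻¹ * (c ⬝ᵥ v)) ≤ t * β := mul_le_mul_of_nonneg_left hb htpos.le
      have h7 : t * (-t⁻¹ * (c ⬝ᵥ v)) = -(c ⬝ᵥ v) := by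
        rw [show t * (-t⁻¹ * (c ⬝ᵥ v)) = -((t * t⁻¹) * (c ⬝ᵥ v)) from by ring, h2, one_mul]
      rw [h7] at h6
      nlinarith
  obtain ⟨lam', hlam0, hlamsum⟩ := farkas_mem g (Fin.snoc c β) hmain
  rw [Fintype.sum_option] at hlamsum
  refine ⟨fun i => lam' (some i), fun i => hlam0 _, ?_, ?_⟩
  · funext j
    have := congrFun hlamsum (Fin.castSucc j)
    rw [hg] at this
    simpa [Fin.snoc_castSucc, Finset.sum_apply, Pi.smul_apply, smul_eq_mul] using this
  · have := congrFun hlamsum (Fin.last m)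
    rw [hg] at this
    simp only [Fin.snoc_last, Option.elim, Pi.add_apply, Pi.smul_apply,
      Finset.sum_apply, smul_eq_mul, mul_one] at this
    have h0 := hlam0 none
    linarith [le_of_eq this]

end Cone

lemma sum_smul_dotProduct {ι : Type*} [Fintype ι] {m : ℕ} (lam : ι → ℝ)
    (a : ι → Fin m → ℝ) (v : Fin m → ℝ) :
    (∑ i, lam i • a i) ⬝ᵥ v = ∑ i, lam i * (a i ⬝ᵥ v) := by
  simp only [dotProduct, Finset.sum_apply, Pi.smul_apply, smul_eq_mul,
    Finset.mul_sum, Finset.sum_mul]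
  rw [Finset.sum_comm]
  exact Finset.sum_congr rfl fun i _ => Finset.sum_congr rfl fun j _ => mul_assoc _ _ _

section Main

theorem stmt15' {p q : ℕ} (νp : (Fin p → ℝ) → ℝ) (νq : (Fin q → ℝ) → ℝ)
    (hνp : IsNorm νp) (hνq : IsNorm νq)
    (Φ : (Fin p → ℝ) → Set (Fin q → ℝ)) (hpoly : IsPolyhedralMapping Φ)
    (hsub : IsSublinearMapping Φ) (ubar : Fin p → ℝ) (hubar : ubar ∈ domOf Φ) :
    sInf (νq '' Φ ubar) =
      sSup {r | ∃ (w : Fin q → ℝ) (z : Fin p → ℝ),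
        dualNorm νq w ≤ 1 ∧ z ∈ upperAdjoint Φ w ∧ r = z ⬝ᵥ ubar} := by
  classical
  obtain ⟨k, f, cvec, hGr⟩ := hpoly
  have h00 : ((0, 0) : (Fin p → ℝ) × (Fin q → ℝ)) ∈ graphOf Φ := hsub.1
  have hcv : ∀ i, 0 ≤ cvec i := by
    intro i
    have := (hGr ▸ h00) i
    simpa [show ((0:Fin p → ℝ), (0:Fin q → ℝ)) = (0 : (Fin p → ℝ) × (Fin q → ℝ)) from rfl] using this
  have hhom : ∀ x : (Fin p → ℝ) × (Fin q → ℝ), x ∈ graphOf Φ ↔ ∀ i, f i x ≤ 0 := by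
    intro x
    constructor
    · intro hx i
      by_contra hpos
      push_neg at hpos
      have ht : (0:ℝ) ≤ (cvec i + 1) / f i x :=
        div_nonneg (by linarith [hcv i]) hpos.le
      have hmem := hsub.2.2 _ ht x hx
      rw [hGr] at hmem
      have := hmem i
      rw [(f i).map_smul, smul_eq_mul, div_mul_cancel₀ _ hpos.ne'] at this
      linarith
    · intro hx
      rw [hGr]
      exact fun i => le_trans (hx i) (hcv i)
  set F : Fin k → (Fin p → ℝ) →ₗ[ℝ] ℝ :=
    fun i => (f i).comp (LinearMap.inl ℝ (Fin p → ℝ) (Fin q → ℝ)) with hF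
  set G : Fin k → (Fin q → ℝ) →ₗ[ℝ] ℝ :=
    fun i => (f i).comp (LinearMap.inr ℝ (Fin p → ℝ) (Fin q → ℝ)) with hGdef
  have hsplit : ∀ i (u : Fin p → ℝ) (v : Fin q → ℝ), f i (u, v) = F i u + G i v := by
    intro i u v
    rw [hF, hGdef]
    simp only [LinearMap.comp_apply, LinearMap.inl_apply, LinearMap.inr_apply]
    rw [← map_add]
    congr 1
    simp
  set a : Fin k → (Fin q → ℝ) := fun i => fun j => G i (Pi.single j 1) with ha
  have hGdot : ∀ i v, G i v = a i ⬝ᵥ v := fun i v => linear_eq_dot (G i) v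
  set d : Fin k → ℝ := fun i => -(F i ubar) with hd
  have hmemΦ : ∀ v, v ∈ Φ ubar ↔ ∀ i, a i ⬝ᵥ v ≤ d i := by
    intro v
    have h1 : v ∈ Φ ubar ↔ (ubar, v) ∈ graphOf Φ := Iff.rfl
    rw [h1, hhom]
    constructor
    · intro h i
      have := h i
      rw [hsplit i ubar v, hGdot] at this
      simp only [hd]
      linarith
    · intro h i
      rw [hsplit i ubar v, hGdot]
      have := h i
      simp only [hd] at this
      linarith
  set μ := sInf (νq '' Φ ubar) with hμ
  obtain ⟨v₀, hv₀⟩ := hubar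
  have hne : (νq '' Φ ubar).Nonempty := ⟨νq v₀, ⟨v₀, hv₀, rfl⟩⟩
  have hbdd : BddBelow (νq '' Φ ubar) := by
    refine ⟨0, ?_⟩
    rintro r ⟨v, hv, rfl⟩
    exact hνq.nonneg v
  have hμ0 : 0 ≤ μ := by
    refine le_csInf hne ?_
    rintro r ⟨v, hv, rfl⟩
    exact hνq.nonneg v
  have hμle : ∀ v ∈ Φ ubar, μ ≤ νq v := fun v hv => csInf_le hbdd ⟨v, hv, rfl⟩
  set S := {r | ∃ (w : Fin q → ℝ) (z : Fin p → ℝ),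
    dualNorm νq w ≤ 1 ∧ z ∈ upperAdjoint Φ w ∧ r = z ⬝ᵥ ubar} with hS
  have hSle : ∀ r ∈ S, r ≤ μ := by
    rintro r ⟨w, z, hw, hz, rfl⟩
    refine le_csInf hne ?_
    rintro r' ⟨v, hv, rfl⟩
    have h1 : z ⬝ᵥ ubar ≤ w ⬝ᵥ v := hz ubar v hv
    have h2 : w ⬝ᵥ v ≤ dualNorm νq w * νq v := hνq.dot_le_dual w v
    have h3 : dualNorm νq w * νq v ≤ 1 * νq v :=
      mul_le_mul_of_nonneg_right hw (hνq.nonneg v)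
    linarith
  have hS0 : (0:ℝ) ∈ S := by
    refine ⟨0, 0, ?_, ?_, by simp⟩
    · have hzset : {r | ∃ x, νq x ≤ 1 ∧ r = (0 : Fin q → ℝ) ⬝ᵥ x} = {(0:ℝ)} := by
        ext r
        simp only [mem_setOf_eq, mem_singleton_iff, zero_dotProduct]
        constructor
        · rintro ⟨x, _, rfl⟩; rfl
        · rintro rfl; exact ⟨0, by simp [hνq.zero], rfl⟩
      rw [dualNorm, hzset, csSup_singleton]
      exact zero_le_one
    · intro u v _
      simp [zero_dotProduct]
  have hSbdd : BddAbove S := ⟨μ, fun r hr => hSle r hr⟩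
  have hmain : ∃ r ∈ S, μ ≤ r := by
    rcases eq_or_lt_of_le hμ0 with hμz | hμpos
    · exact ⟨0, hS0, hμz.ge⟩
    · -- separation
      have hsetΦ : Φ ubar = {v | ∀ i, a i ⬝ᵥ v ≤ d i} := Set.ext hmemΦ
      have hconv : Convex ℝ (Φ ubar) := by
        rw [hsetΦ]
        intro x hx y hy α β hα hβ hαβ
        intro i
        have : a i ⬝ᵥ (α • x + β • y) = α * (a i ⬝ᵥ x) + β * (a i ⬝ᵥ y) := by
          rw [dotProduct_add, dotProduct_smul, dotProduct_smul, smul_eq_mul, smul_eq_mul]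
        rw [this]
        calc α * (a i ⬝ᵥ x) + β * (a i ⬝ᵥ y)
            ≤ α * d i + β * d i :=
              add_le_add (mul_le_mul_of_nonneg_left (hx i) hα)
                (mul_le_mul_of_nonneg_left (hy i) hβ)
          _ = d i := by rw [← add_mul, hαβ, one_mul]
      have hclosed : IsClosed (Φ ubar) := by
        rw [hsetΦ]
        have : {v : Fin q → ℝ | ∀ i, a i ⬝ᵥ v ≤ d i} = ⋂ i, {v | a i ⬝ᵥ v ≤ d i} := by
          ext; simp
        rw [this]
        refine isClosed_iInter fun i => isClosed_le ?_ continuous_const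
        show Continuous fun v : Fin q → ℝ => ∑ j, a i j * v j
        exact continuous_finset_sum _ fun j _ => continuous_const.mul (continuous_apply j)
      have hopen : IsOpen {v : Fin q → ℝ | νq v < μ} :=
        isOpen_lt hνq.continuous continuous_const
      have hdisj : Disjoint {v : Fin q → ℝ | νq v < μ} (Φ ubar) := by
        rw [Set.disjoint_left]
        intro v hvB hvΦ
        exact absurd (hμle v hvΦ) (not_le.2 hvB)
      obtain ⟨fL, u0, hfB, hfΦ⟩ :=
        geometric_hahn_banach_open (hνq.convex_ball μ) hopen hconv hdisj
      have hu0 : 0 < u0 := by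
        have h0B : (0 : Fin q → ℝ) ∈ {v : Fin q → ℝ | νq v < μ} := by
          simp [hνq.zero, hμpos]
        have := hfB 0 h0B
        simpa using this
      set w₀ : Fin q → ℝ := fun j => fL (Pi.single j 1) with hw₀
      have hfrep : ∀ x, fL x = w₀ ⬝ᵥ x := fun x =>
        linear_eq_dot (fL : (Fin q → ℝ) →ₗ[ℝ] ℝ) x
      have hdual₀ : ∀ x, νq x ≤ 1 → μ * (w₀ ⬝ᵥ x) ≤ u0 := by
        intro x hx
        rcases le_or_gt (w₀ ⬝ᵥ x) 0 with hsn | hsp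
        · nlinarith
        · by_contra hgt
          push_neg at hgt
          set tt := u0 / (w₀ ⬝ᵥ x) with htt
          have htpos : 0 < tt := div_pos hu0 hsp
          have htlt : tt < μ := by
            rw [htt, div_lt_iff₀ hsp]
            linarith
          have hmem : tt • x ∈ {v : Fin q → ℝ | νq v < μ} := by
            have : νq (tt • x) = tt * νq x := by
              rw [hνq.smul, abs_of_pos htpos]
            simp only [mem_setOf_eq, this]
            nlinarith
          have hlt := hfB _ hmem
          rw [hfrep, dotProduct_smul, smul_eq_mul, htt,
            div_mul_cancel₀ _ hsp.ne'] at hlt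
          exact lt_irrefl u0 hlt
      set w : Fin q → ℝ := (μ / u0) • w₀ with hw
      have hwd : dualNorm νq w ≤ 1 := by
        refine Real.sSup_le ?_ zero_le_one
        rintro r ⟨x, hx, rfl⟩
        rw [hw, smul_dotProduct, smul_eq_mul]
        have := hdual₀ x hx
        rw [div_mul_eq_mul_div, div_le_one hu0]
        linarith
      have hwv : ∀ v ∈ Φ ubar, μ ≤ w ⬝ᵥ v := by
        intro v hv
        rw [hw, smul_dotProduct, smul_eq_mul, ← hfrep]
        have h1 := hfΦ v hv
        calc μ = (μ / u0) * u0 := by field_simp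
          _ ≤ (μ / u0) * fL v :=
            mul_le_mul_of_nonneg_left h1 (by positivity)
      have hfeas : ∃ v, ∀ i, a i ⬝ᵥ v ≤ d i := ⟨v₀, (hmemΦ v₀).1 hv₀⟩
      have hboundF : ∀ v, (∀ i, a i ⬝ᵥ v ≤ d i) → (-w) ⬝ᵥ v ≤ -μ := by
        intro v hv
        have := hwv v ((hmemΦ v).2 hv)
        rw [neg_dotProduct]
        linarith
      obtain ⟨lam, hlam0, hceq, hsum⟩ := farkas_affine a d (-w) (-μ) hfeas hboundF
      set Fz : (Fin p → ℝ) →ₗ[ℝ] ℝ := ∑ i, lam i • F i with hFz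
      set z : Fin p → ℝ := fun j => Fz (Pi.single j 1) with hz
      have hzdot : ∀ u, z ⬝ᵥ u = ∑ i, lam i * F i u := by
        intro u
        have h1 : Fz u = z ⬝ᵥ u := linear_eq_dot Fz u
        rw [← h1, hFz]
        simp [LinearMap.sum_apply, LinearMap.smul_apply, smul_eq_mul]
      have hwdot : ∀ v, w ⬝ᵥ v = -∑ i, lam i * (a i ⬝ᵥ v) := by
        intro v
        have h1 : (-w) ⬝ᵥ v = ∑ i, lam i * (a i ⬝ᵥ v) := by
          rw [hceq, sum_smul_dotProduct]
        rw [neg_dotProduct] at h1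
        linarith
      have hzmem : z ∈ upperAdjoint Φ w := by
        intro u v hv
        have hfle : ∀ i, f i (u, v) ≤ 0 := (hhom (u, v)).1 hv
        have hsum0 : ∑ i, lam i * f i (u, v) ≤ 0 :=
          Finset.sum_nonpos fun i _ => mul_nonpos_of_nonneg_of_nonpos (hlam0 i) (hfle i)
        have hexp : ∑ i, lam i * f i (u, v)
            = ∑ i, lam i * F i u + ∑ i, lam i * (a i ⬝ᵥ v) := by
          rw [← Finset.sum_add_distrib]
          refine Finset.sum_congr rfl fun i _ => ?_
          rw [hsplit i u v, hGdot, mul_add]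
        rw [hzdot, hwdot]
        rw [hexp] at hsum0
        linarith
      have hzval : μ ≤ z ⬝ᵥ ubar := by
        rw [hzdot]
        have h1 : ∑ i, lam i * F i ubar = -∑ i, lam i * d i := by
          rw [← Finset.sum_neg_distrib]
          refine Finset.sum_congr rfl fun i _ => ?_
          simp only [hd]
          ring
        rw [h1]
        linarith
      exact ⟨z ⬝ᵥ ubar, ⟨w, z, hwd, hzmem, rfl⟩, hzval⟩
  obtain ⟨r, hrS, hμr⟩ := hmain
  have h1 : sSup S ≤ μ := Real.sSup_le hSle hμ0
  have h2 : μ ≤ sSup S := le_trans hμr (le_csSup hSbdd hrS)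
  linarith

end Main

/-- minimax identity
`min_{v ∈ Φ(ū)} ‖v‖ = max { ⟨z, ū⟩ : ‖w‖* ≤ 1, z ∈ Φ*(w) }`. -/
theorem stmt15 {p q : ℕ} (νp : (Fin p → ℝ) → ℝ) (νq : (Fin q → ℝ) → ℝ)
    (hνp : IsNorm νp) (hνq : IsNorm νq)
    (Φ : (Fin p → ℝ) → Set (Fin q → ℝ)) (hpoly : IsPolyhedralMapping Φ)
    (hsub : IsSublinearMapping Φ) (ubar : Fin p → ℝ) (hubar : ubar ∈ domOf Φ) :
    sInf (νq '' Φ ubar) =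
      sSup {r | ∃ (w : Fin q → ℝ) (z : Fin p → ℝ),
        dualNorm νq w ≤ 1 ∧ z ∈ upperAdjoint Φ w ∧ r = z ⬝ᵥ ubar} := by
  exact stmt15' νp νq hνp hνq Φ hpoly hsub ubar hubar
end

section
/- Let A ∈ ℝ^{m×n} and I ⊆ {1,…,n}. The set {Ax : x ∈ ℝ^n, x_i ≥ 0 for all i ∈ I} is a linear subspace of ℝ^m if and only if the Slater condition holds: there exists x ∈ ℝ^n with Ax = 0 and x_i > 0 for all i ∈ I. -/
open Matrix Set

/-- `{Ax : x_I ≥ 0}` is a linear subspace iff the Slater condition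
`∃ x, Ax = 0, x_I > 0` holds. -/
theorem stmt18 {m n : ℕ} (A : Matrix (Fin m) (Fin n) ℝ) (I : Set (Fin n)) :
    IsLinearSubspace {w : Fin m → ℝ | ∃ x : Fin n → ℝ, (∀ i ∈ I, 0 ≤ x i) ∧ w = A *ᵥ x} ↔
      ∃ x : Fin n → ℝ, A *ᵥ x = 0 ∧ ∀ i ∈ I, 0 < x i := by
  classical
  constructor
  · rintro ⟨W, hW⟩
    have hWmem : ∀ w : Fin m → ℝ,
        (∃ x : Fin n → ℝ, (∀ i ∈ I, 0 ≤ x i) ∧ w = A *ᵥ x) ↔ w ∈ W := by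
      intro w
      constructor
      · intro h; have : w ∈ {w : Fin m → ℝ | ∃ x : Fin n → ℝ, (∀ i ∈ I, 0 ≤ x i) ∧ w = A *ᵥ x} := h
        rwa [hW] at this
      · intro h; have : w ∈ (W : Set (Fin m → ℝ)) := h
        rw [← hW] at this; exact this
    have H : ∀ i : Fin n, i ∈ I → ∃ y : Fin n → ℝ,
        (∀ j ∈ I, 0 ≤ y j) ∧ A *ᵥ y = -(A *ᵥ Pi.single i 1) := by
      intro i hi
      have h1 : A *ᵥ Pi.single i 1 ∈ W := by
        refine (hWmem _).mp ⟨Pi.single i 1, ?_, rfl⟩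
        intro j _
        rcases eq_or_ne j i with rfl | hne
        · simp
        · simp [Pi.single_apply, hne]
      have h2 : -(A *ᵥ Pi.single i 1) ∈ W := W.neg_mem h1
      obtain ⟨y, hy1, hy2⟩ := (hWmem _).mpr h2
      exact ⟨y, hy1, hy2.symm⟩
    set y : Fin n → (Fin n → ℝ) := fun i => if h : i ∈ I then (H i h).choose else 0 with hy
    have hy1 : ∀ i, i ∈ I → ∀ j ∈ I, 0 ≤ y i j := by
      intro i hi j hj
      simp only [hy, dif_pos hi]
      exact (H i hi).choose_spec.1 j hj
    have hy2 : ∀ i, i ∈ I → A *ᵥ y i = -(A *ᵥ Pi.single i 1) := by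
      intro i hi
      simp only [hy, dif_pos hi]
      exact (H i hi).choose_spec.2
    set term : Fin n → (Fin n → ℝ) :=
      fun i => if i ∈ I then Pi.single i 1 + y i else 0 with hterm
    refine ⟨∑ i, term i, ?_, ?_⟩
    · rw [← Matrix.mulVecLin_apply, map_sum]
      refine Finset.sum_eq_zero fun i _ => ?_
      by_cases hi : i ∈ I
      · simp only [hterm, if_pos hi, Matrix.mulVecLin_apply, Matrix.mulVec_add, hy2 i hi]
        abel
      · simp [hterm, if_neg hi]
    · intro j hj
      rw [Finset.sum_apply]
      refine Finset.sum_pos' ?_ ⟨j, Finset.mem_univ j, ?_⟩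
      · intro i _
        by_cases hi : i ∈ I
        · simp only [hterm, if_pos hi, Pi.add_apply]
          have h1 : (0:ℝ) ≤ (Pi.single i 1 : Fin n → ℝ) j := by
            rcases eq_or_ne j i with rfl | hne
            · simp
            · simp [Pi.single_apply, hne]
          have h2 := hy1 i hi j hj
          linarith
        · simp [hterm, if_neg hi]
      · simp only [hterm, if_pos hj, Pi.add_apply, Pi.single_eq_same]
        have h2 := hy1 j hj j hj
        linarith
  · rintro ⟨x0, hx0, hx0I⟩
    refine ⟨LinearMap.range A.mulVecLin, ?_⟩
    ext w
    simp only [Set.mem_setOf_eq, SetLike.mem_coe, LinearMap.mem_range,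
      Matrix.mulVecLin_apply]
    constructor
    · rintro ⟨x, -, rfl⟩; exact ⟨x, rfl⟩
    · rintro ⟨x, rfl⟩
      set t := ∑ i, |x i / x0 i| with ht
      refine ⟨x + t • x0, ?_, ?_⟩
      · intro i hi
        have htle : |x i / x0 i| ≤ t :=
          Finset.single_le_sum (f := fun j => |x j / x0 j|) (fun j _ => abs_nonneg _) (Finset.mem_univ i)
        have h0 : 0 < x0 i := hx0I i hi
        have h1 : |x i| / x0 i ≤ t := by rwa [abs_div, abs_of_pos h0] at htle
        have h2 : |x i| ≤ t * x0 i := (div_le_iff₀ h0).mp h1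
        have h3 : -x i ≤ |x i| := neg_le_abs _
        simp only [Pi.add_apply, Pi.smul_apply, smul_eq_mul]
        linarith
      · rw [Matrix.mulVec_add, Matrix.mulVec_smul, hx0, smul_zero, add_zero]
end

section
/- Let A ∈ ℝ^{m×n} and I ⊆ {1,…,n}. The set {Aᵀy + s : y ∈ ℝ^m, s ∈ ℝ^n, s_i ≥ 0 for all i ∈ I} is a linear subspace of ℝ^n if and only if the Slater condition holds: there exists y ∈ ℝ^m with (Aᵀy)_i < 0 for all i ∈ I. -/
open Matrix Set

/-- `{Aᵀy + s : s_I ≥ 0}` is a linear subspace iff the Slater condition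
`∃ y, (Aᵀy)_I < 0` holds. -/
theorem stmt19 {m n : ℕ} (A : Matrix (Fin m) (Fin n) ℝ) (I : Set (Fin n)) :
    IsLinearSubspace {w : Fin n → ℝ |
        ∃ (y : Fin m → ℝ) (s : Fin n → ℝ), (∀ i ∈ I, 0 ≤ s i) ∧ w = Aᵀ *ᵥ y + s} ↔
      ∃ y : Fin m → ℝ, ∀ i ∈ I, (Aᵀ *ᵥ y) i < 0 := by
  classical
  constructor
  · rintro ⟨W, hW⟩
    set v : Fin n → ℝ := fun i => if i ∈ I then 1 else 0 with hv
    have hvmem : v ∈ (W : Set (Fin n → ℝ)) := by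
      rw [← hW]
      exact ⟨0, v, fun i hi => by simp [hv, hi], by simp⟩
    have hneg : -v ∈ (W : Set (Fin n → ℝ)) := W.neg_mem hvmem
    rw [← hW] at hneg
    obtain ⟨y, s, hs, hEq⟩ := hneg
    refine ⟨y, fun i hi => ?_⟩
    have h1 := congrFun hEq i
    simp only [Pi.neg_apply, Pi.add_apply, hv, if_pos hi] at h1
    have h2 := hs i hi
    linarith
  · rintro ⟨y, hy⟩
    refine ⟨⊤, ?_⟩
    ext w
    simp only [Set.mem_setOf_eq, SetLike.mem_coe, Submodule.mem_top, iff_true]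
    set t : ℝ := ∑ i, |w i / (Aᵀ *ᵥ y) i| with ht
    refine ⟨t • y, w - Aᵀ *ᵥ (t • y), fun i hi => ?_, by abel⟩
    have hv := hy i hi
    have h1 : w i / (Aᵀ *ᵥ y) i ≤ t := by
      rw [ht]
      have := Finset.single_le_sum (f := fun j => |w j / (Aᵀ *ᵥ y) j|)
        (fun j _ => abs_nonneg _) (Finset.mem_univ i)
      exact le_trans (le_abs_self _) this
    have h2 : t * (Aᵀ *ᵥ y) i ≤ (w i / (Aᵀ *ᵥ y) i) * (Aᵀ *ᵥ y) i :=
      mul_le_mul_of_nonpos_right h1 (le_of_lt hv)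
    rw [div_mul_cancel₀ _ (ne_of_lt hv)] at h2
    have h3 : (Aᵀ *ᵥ (t • y)) i = t * (Aᵀ *ᵥ y) i := by
      rw [Matrix.mulVec_smul]; rfl
    simp only [Pi.sub_apply, h3]
    linarith
end
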